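/- arXiv:1709.02839 — 7 statements merged into one kernel-verified Lean document; each statement's English description precedes it below -/
import Mathlib

section
/- Let ς ∈ ℝⁿ with ς₁ < ς₂ < … < ς_n, and for θ ∈ Θ set c_θ = (∏_{k=1}^{|θ|} m_{θ_k})·(∏_{k=1}^{|θ|−1} (ς_{i_k+1} − ς_{i_k})), where i_k = max θ_k. Then for every θ ∈ Θ, the vector b^θ := (1/c_θ)·Σ_{θ̃∈Θ : θ∈∂θ̃} c_{θ̃}·b^{θ̃,θ} satisfies b^θ = ς − P_θ ς. -/
open MeasureTheory Set Finset

noncomputable section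

attribute [local instance] Classical.propDecidable

/-!
An ordered partition `θ ∈ Θ` of `[n] = {0,…,n−1}` into blocks of consecutive
integers is encoded by its set of cut points `S ⊆ {1,…,n−1}`:
indices `i, j` lie in the same block iff no cut separates them, i.e. iff
`∀ c ∈ S, (c ≤ i ↔ c ≤ j)`.  The number of blocks is `|θ| = S.card + 1`.
-/

/-- the block of the partition (encoded by the cut set `S`) containing `i`. -/
def block (n : ℕ) (S : Finset ℕ) (i : Fin n) : Finset (Fin n) :=
  univ.filter fun j => ∀ c ∈ S, (c ≤ (i : ℕ) ↔ c ≤ (j : ℕ))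

/-- `m_{θ_k}`: the mass of the block containing `i`. -/
def blockMassAt (n : ℕ) (m : Fin n → ℝ) (S : Finset ℕ) (i : Fin n) : ℝ :=
  ∑ j ∈ block n S i, m j

/-- The vector `b^{θ̃,θ}` where `θ̃` is encoded by the cut set `S` (with `c ∈ S`)
and `θ` is obtained from `θ̃` by merging the two blocks adjacent to the cut `c`:
its `i`-th entry is `−1/m_{θ̃_k}` on the block left of `c`, `1/m_{θ̃_{k+1}}` on the
block right of `c`, and `0` otherwise. -/
def bvec (n : ℕ) (m : Fin n → ℝ) (S : Finset ℕ) (c : ℕ) (i : Fin n) : ℝ :=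
  if hc : 0 < c ∧ c < n then
    if (∀ d ∈ S, (d ≤ (i : ℕ) ↔ d ≤ c - 1)) then
      -1 / blockMassAt n m S ⟨c - 1, by omega⟩
    else if (∀ d ∈ S, (d ≤ (i : ℕ) ↔ d ≤ c)) then
      1 / blockMassAt n m S ⟨c, hc.2⟩
    else 0
  else 0

/-- index (in `Fin (S.card + 1)`) of the block containing `j`. -/
def blockIdx (n : ℕ) (S : Finset ℕ) (j : Fin n) : Fin (S.card + 1) :=
  ⟨(S.filter fun c => c ≤ (j : ℕ)).card, Nat.lt_succ_of_le (Finset.card_filter_le _ _)⟩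

/-- `m_{θ_k}`: the mass of the `k`-th block. -/
def bmass (n : ℕ) (m : Fin n → ℝ) (S : Finset ℕ) (k : Fin (S.card + 1)) : ℝ :=
  ∑ j ∈ univ.filter (fun j => blockIdx n S j = k), m j

/-- `R_θ^{-1} : E^{|θ|} → Eⁿ`, assigning to each index its block value. -/
def extMap (n : ℕ) (S : Finset ℕ) (y : Fin (S.card + 1) → ℝ) : Fin n → ℝ :=
  fun j => y (blockIdx n S j)

/-- `P_θ`: block-averaging operator, `(P_θ x)_i = (1/m_{θ_k}) Σ_{j∈θ_k} m_j x_j`. -/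
def Pmat (n : ℕ) (m : Fin n → ℝ) (S : Finset ℕ) (x : Fin n → ℝ) (i : Fin n) : ℝ :=
  (∑ j ∈ block n S i, m j * x j) / blockMassAt n m S i

/-- `ς` evaluated at a natural index (junk `0` out of range). -/
def sigAt (n : ℕ) (ς : Fin n → ℝ) (c : ℕ) : ℝ := if h : c < n then ς ⟨c, h⟩ else 0

/-- the constants `c_θ = (∏_k m_{θ_k}) ∏_{k=1}^{|θ|−1} (ς_{i_k+1} − ς_{i_k})`
(`i_k = max θ_k`); in cut-set language the second product is over the cuts `c ∈ S`
and the `k`-th factor reads `ς_c − ς_{c−1}` (`0`-based indexing). -/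
def cSigma (n : ℕ) (m : Fin n → ℝ) (ς : Fin n → ℝ) (S : Finset ℕ) : ℝ :=
  (∏ i ∈ univ.filter (fun i : Fin n => (i : ℕ) = 0 ∨ (i : ℕ) ∈ S), blockMassAt n m S i) *
  ∏ c ∈ S, (sigAt n ς c - sigAt n ς (c - 1))

/-- `b^θ = (1/c_θ) Σ_{θ̃ : θ ∈ ∂θ̃} c_{θ̃} b^{θ̃,θ}`; the partitions `θ̃` with
`θ ∈ ∂θ̃` are exactly those obtained from `θ` by inserting one extra cut. -/
def bS (n : ℕ) (m : Fin n → ℝ) (ς : Fin n → ℝ) (S : Finset ℕ) (i : Fin n) : ℝ :=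
  (1 / cSigma n m ς S) *
    ∑ c ∈ Finset.Ioo 0 n \ S, cSigma n m ς (insert c S) * bvec n m (insert c S) c i

/-! ### Auxiliary lemmas -/

lemma mem_block {n : ℕ} {S : Finset ℕ} {i j : Fin n} :
    j ∈ block n S i ↔ ∀ d ∈ S, (d ≤ (i : ℕ) ↔ d ≤ (j : ℕ)) := by
  simp [block]

lemma block_eq {n : ℕ} {S : Finset ℕ} {i j : Fin n} (h : j ∈ block n S i) :
    block n S j = block n S i := by
  rw [mem_block] at h
  ext k
  simp only [mem_block]
  constructor <;> intro hk d hd <;> have h1 := h d hd <;> have h2 := hk d hd <;> tauto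

lemma blockMassAt_pos {n : ℕ} {m : Fin n → ℝ} (hm : ∀ i, 0 < m i) (S : Finset ℕ) (i : Fin n) :
    0 < blockMassAt n m S i := by
  apply Finset.sum_pos (fun j _ => hm j)
  exact ⟨i, mem_block.2 fun d _ => Iff.rfl⟩

lemma blockMassAt_congr {n : ℕ} {m : Fin n → ℝ} {S : Finset ℕ} {i j : Fin n}
    (h : j ∈ block n S i) : blockMassAt n m S j = blockMassAt n m S i := by
  unfold blockMassAt; rw [block_eq h]

lemma sigAt_coe {n : ℕ} (ς : Fin n → ℝ) (i : Fin n) : sigAt n ς (i : ℕ) = ς i := by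
  simp [sigAt]

lemma tele {n : ℕ} (ς : Fin n → ℝ) : ∀ {a b : ℕ}, a ≤ b → b < n →
    ∑ c ∈ Finset.Ioc a b, (sigAt n ς c - sigAt n ς (c - 1)) = sigAt n ς b - sigAt n ς a := by
  intro a b h
  induction b, h using Nat.le_induction with
  | base => simp
  | succ b hb ih =>
    intro hbn
    rw [Finset.sum_Ioc_succ_top (by omega), ih (by omega)]
    simp only [Nat.add_sub_cancel]
    ring

/-- left endpoint of the block (under cut set `S`) containing `i`. -/
def repN (S : Finset ℕ) (i : ℕ) : ℕ :=
  (insert 0 (S.filter fun d => d ≤ i)).max' (Finset.insert_nonempty _ _)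

lemma repN_le (S : Finset ℕ) (i : ℕ) : repN S i ≤ i := by
  apply Finset.max'_le
  intro y hy
  simp only [Finset.mem_insert, Finset.mem_filter] at hy
  rcases hy with rfl | ⟨_, h⟩ <;> omega

lemma repN_mem (S : Finset ℕ) (i : ℕ) : repN S i = 0 ∨ repN S i ∈ S := by
  have h := Finset.max'_mem (insert 0 (S.filter fun d => d ≤ i)) (Finset.insert_nonempty _ _)
  simp only [Finset.mem_insert, Finset.mem_filter] at h
  tauto

lemma repN_block (S : Finset ℕ) (i : ℕ) : ∀ d ∈ S, (d ≤ repN S i ↔ d ≤ i) := by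
  intro d hd
  constructor
  · intro h; exact h.trans (repN_le S i)
  · intro h
    apply Finset.le_max'
    simp [hd, h]

lemma rep_unique {n : ℕ} {S : Finset ℕ} (hS : S ⊆ Finset.Ioo 0 n) {r i : ℕ}
    (hr : r = 0 ∨ r ∈ S) (hb : ∀ d ∈ S, (d ≤ r ↔ d ≤ i)) : r = repN S i := by
  have hal := repN_le S i
  rcases repN_mem S i with ha | ha <;> rcases hr with hr | hr
  · omega
  · have h1 := hb r hr
    have h2 := repN_block S i r hr
    have h3 := Finset.mem_Ioo.1 (hS hr)
    omega
  · have h1 := hb (repN S i) ha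
    have h3 := Finset.mem_Ioo.1 (hS ha)
    omega
  · have h1 := hb r hr
    have h2 := repN_block S i r hr
    have h4 := hb (repN S i) ha
    omega

lemma block_insert_of_ne {n : ℕ} {S : Finset ℕ} {c : ℕ} {r : Fin n}
    (h : ¬ ∀ d ∈ S, (d ≤ (r : ℕ) ↔ d ≤ c)) :
    block n (insert c S) r = block n S r := by
  push_neg at h
  obtain ⟨d, hd, hiff⟩ := h
  ext j
  simp only [mem_block, Finset.mem_insert]
  constructor
  · intro hj e he; exact hj e (Or.inr he)
  · intro hj e he
    rcases he with rfl | he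
    · have h1 := hj d hd
      omega
    · exact hj e he

lemma cSigma_pos {n : ℕ} {m ς : Fin n → ℝ} (hm : ∀ i, 0 < m i) (hς : StrictMono ς)
    {S : Finset ℕ} (hS : S ⊆ Finset.Ioo 0 n) : 0 < cSigma n m ς S := by
  apply mul_pos
  · exact Finset.prod_pos fun i _ => blockMassAt_pos hm S i
  · apply Finset.prod_pos
    intro d hd
    have hd' := Finset.mem_Ioo.1 (hS hd)
    rw [sigAt, sigAt, dif_pos hd'.2, dif_pos (by omega : d - 1 < n)]
    have : (⟨d - 1, by omega⟩ : Fin n) < ⟨d, hd'.2⟩ := by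
      simp [Fin.lt_def]; omega
    linarith [hς this]

lemma cSigma_insert {n : ℕ} (m ς : Fin n → ℝ) (hm : ∀ i, 0 < m i) {S : Finset ℕ}
    (hS : S ⊆ Finset.Ioo 0 n) {c : ℕ} (hc0 : 0 < c) (hcn : c < n) (hcS : c ∉ S) :
    cSigma n m ς (insert c S) =
      cSigma n m ς S / blockMassAt n m S ⟨c, hcn⟩ *
        (blockMassAt n m (insert c S) ⟨c - 1, by omega⟩ *
          blockMassAt n m (insert c S) ⟨c, hcn⟩) *
        (sigAt n ς c - sigAt n ς (c - 1)) := by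
  set a : ℕ := repN S c with ha
  have hac : a ≤ c := repN_le S c
  have ha0 : a = 0 ∨ a ∈ S := repN_mem S c
  have hanec : a ≠ c := by
    rcases ha0 with h | h
    · omega
    · intro e; exact hcS (e ▸ h)
  set aF : Fin n := ⟨a, by omega⟩ with haF
  -- the representatives of `insert c S` are those of `S` plus `c`
  have h1 : (univ.filter fun r : Fin n => (r : ℕ) = 0 ∨ (r : ℕ) ∈ insert c S)
      = insert ⟨c, hcn⟩ (univ.filter fun r : Fin n => (r : ℕ) = 0 ∨ (r : ℕ) ∈ S) := by
    ext r
    simp only [Finset.mem_filter, Finset.mem_univ, true_and, Finset.mem_insert, Fin.ext_iff]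
    constructor
    · rintro (h | h | h) <;> tauto
    · rintro (h | h | h) <;> tauto
  have hnotmem : (⟨c, hcn⟩ : Fin n) ∉ (univ.filter fun r : Fin n => (r : ℕ) = 0 ∨ (r : ℕ) ∈ S) := by
    simp [hcS]; omega
  have hamem : aF ∈ (univ.filter fun r : Fin n => (r : ℕ) = 0 ∨ (r : ℕ) ∈ S) := by
    simp only [Finset.mem_filter, Finset.mem_univ, true_and]; exact ha0
  -- block masses at the representative `a`
  have haC : aF ∈ block n S ⟨c, hcn⟩ := by
    apply mem_block.2
    intro d hd
    show d ≤ c ↔ d ≤ a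
    exact (repN_block S c d hd).symm
  have hfa : blockMassAt n m S aF = blockMassAt n m S ⟨c, hcn⟩ := blockMassAt_congr haC
  have hfa' : blockMassAt n m (insert c S) aF
      = blockMassAt n m (insert c S) ⟨c - 1, by omega⟩ := by
    apply blockMassAt_congr
    apply mem_block.2
    intro d hd
    show d ≤ c - 1 ↔ d ≤ a
    rcases Finset.mem_insert.1 hd with rfl | hd
    · omega
    · have h2 := repN_block S c d hd
      have : d ≠ c := fun e => hcS (e ▸ hd)
      omega
  -- other representatives keep their blocks
  have hother : ∀ r ∈ (univ.filter fun r : Fin n => (r : ℕ) = 0 ∨ (r : ℕ) ∈ S).erase aF,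
      blockMassAt n m (insert c S) r = blockMassAt n m S r := by
    intro r hr
    obtain ⟨hrne, hrmem⟩ := Finset.mem_erase.1 hr
    unfold blockMassAt
    rw [block_insert_of_ne]
    intro hcon
    apply hrne
    have hmem := (Finset.mem_filter.1 hrmem).2
    have : (r : ℕ) = repN S c := rep_unique hS hmem hcon
    exact Fin.ext (by rw [this])
  have hmul : ∀ (f : Fin n → ℝ),
      ∏ r ∈ (univ.filter fun r : Fin n => (r : ℕ) = 0 ∨ (r : ℕ) ∈ S), f r
        = f aF * ∏ r ∈ (univ.filter fun r : Fin n => (r : ℕ) = 0 ∨ (r : ℕ) ∈ S).erase aF, f r :=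
    fun f => (Finset.mul_prod_erase _ f hamem).symm
  have hmB : blockMassAt n m S ⟨c, hcn⟩ ≠ 0 := ne_of_gt (blockMassAt_pos hm S _)
  unfold cSigma
  rw [h1, Finset.prod_insert hnotmem, Finset.prod_insert hcS,
    hmul (fun r => blockMassAt n m (insert c S) r),
    hmul (fun r => blockMassAt n m S r),
    Finset.prod_congr rfl hother, hfa, hfa']
  field_simp

/-- `W c = m_L` (mass left of cut `c` in the block of `i`) if `c ≤ i`, `−m_R` otherwise. -/
def Waux (n : ℕ) (m : Fin n → ℝ) (S : Finset ℕ) (i : Fin n) (c : ℕ) : ℝ :=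
  if c ≤ (i : ℕ) then (∑ j ∈ block n S i, if (j : ℕ) < c then m j else 0)
  else -(∑ j ∈ block n S i, if c ≤ (j : ℕ) then m j else 0)

/-- summand of the double sum in the key identity. -/
def Faux (n : ℕ) (m ς : Fin n → ℝ) (i : Fin n) (c : ℕ) (j : Fin n) : ℝ :=
  (sigAt n ς c - sigAt n ς (c - 1)) *
    (if c ≤ (i : ℕ) then (if (j : ℕ) < c then m j else 0)
     else -(if c ≤ (j : ℕ) then m j else 0))

/-- **Proposition 3.3, first part.** With the particular constants
`c_θ` built from a strictly increasing vector `ς`, the drift vector `b^θ`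
equals `ς − P_θ ς` for every ordered partition `θ` (encoded by the cut set `S`). -/
theorem stmt_1 (n : ℕ) (hn : 0 < n) (m : Fin n → ℝ)
    (hm : ∀ i, m i ∈ Set.Ioc (0:ℝ) 1) (hmsum : ∑ i, m i = 1)
    (ς : Fin n → ℝ) (hς : StrictMono ς)
    (S : Finset ℕ) (hS : S ⊆ Finset.Ioo 0 n) :
    ∀ i : Fin n, bS n m ς S i = ς i - Pmat n m S ς i := by
  intro i
  have hm' : ∀ j, 0 < m j := fun j => (hm j).1
  have hmBpos : 0 < blockMassAt n m S i := blockMassAt_pos hm' S i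
  have hcSpos : 0 < cSigma n m ς S := cSigma_pos hm' hς hS
  have hin := i.isLt
  set T := (Finset.Ioo 0 n \ S).filter (fun c => ∀ d ∈ S, (d ≤ c ↔ d ≤ (i : ℕ))) with hT
  -- Step A: terms with cut `c` outside the block of `i` vanish
  have hsum1 : ∑ c ∈ Finset.Ioo 0 n \ S, cSigma n m ς (insert c S) * bvec n m (insert c S) c i
      = ∑ c ∈ T, cSigma n m ς (insert c S) * bvec n m (insert c S) c i := by
    refine (Finset.sum_subset (Finset.filter_subset _ _) ?_).symm
    intro c hc1 hc2
    obtain ⟨hio, hns⟩ := Finset.mem_sdiff.1 hc1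
    obtain ⟨h0, hn'⟩ := Finset.mem_Ioo.1 hio
    have hPc : ¬ (∀ d ∈ S, (d ≤ c ↔ d ≤ (i : ℕ))) := fun h =>
      hc2 (Finset.mem_filter.2 ⟨hc1, h⟩)
    have hneg1 : ¬ (∀ d ∈ insert c S, ((d : ℕ) ≤ (i : ℕ) ↔ d ≤ c - 1)) := by
      intro h
      apply hPc
      intro d hd
      have h1 := h d (Finset.mem_insert_of_mem hd)
      have h2 := h c (Finset.mem_insert_self c S)
      have hne : d ≠ c := fun e => hns (e ▸ hd)
      omega
    have hneg2 : ¬ (∀ d ∈ insert c S, ((d : ℕ) ≤ (i : ℕ) ↔ d ≤ c)) := by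
      intro h
      apply hPc
      intro d hd
      have h1 := h d (Finset.mem_insert_of_mem hd)
      omega
    have hb : bvec n m (insert c S) c i = 0 := by
      unfold bvec
      rw [dif_pos (⟨h0, hn'⟩ : 0 < c ∧ c < n), if_neg hneg1, if_neg hneg2]
    rw [hb, mul_zero]
  -- Step B: per-term rewrite on T
  have hterm : ∀ c ∈ T, cSigma n m ς (insert c S) * bvec n m (insert c S) c i
      = cSigma n m ς S *
          ((sigAt n ς c - sigAt n ς (c - 1)) * Waux n m S i c / blockMassAt n m S i) := by
    intro c hc
    obtain ⟨hc1, hPc⟩ := Finset.mem_filter.1 hc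
    obtain ⟨hio, hns⟩ := Finset.mem_sdiff.1 hc1
    obtain ⟨hc0, hcn⟩ := Finset.mem_Ioo.1 hio
    have hmemc : (⟨c, hcn⟩ : Fin n) ∈ block n S i := by
      apply mem_block.2
      intro d hd
      exact (hPc d hd).symm
    have hmBc : blockMassAt n m S ⟨c, hcn⟩ = blockMassAt n m S i := blockMassAt_congr hmemc
    have hLset : block n (insert c S) ⟨c - 1, by omega⟩
        = (block n S i).filter (fun j : Fin n => (j : ℕ) < c) := by
      ext j
      simp only [mem_block, Finset.mem_filter, Finset.mem_insert]
      constructor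
      · intro h
        have h1 := h c (Or.inl rfl)
        refine ⟨fun d hd => ?_, by omega⟩
        have h2 := h d (Or.inr hd)
        have h3 := hPc d hd
        have hne : d ≠ c := fun e => hns (e ▸ hd)
        omega
      · rintro ⟨hjB, hjc⟩
        intro d hd
        rcases hd with rfl | hd
        · omega
        · have h2 := hjB d hd
          have h3 := hPc d hd
          have hne : d ≠ c := fun e => hns (e ▸ hd)
          omega
    have hRset : block n (insert c S) ⟨c, hcn⟩
        = (block n S i).filter (fun j : Fin n => c ≤ (j : ℕ)) := by
      ext j
      simp only [mem_block, Finset.mem_filter, Finset.mem_insert]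
      constructor
      · intro h
        have h1 := h c (Or.inl rfl)
        refine ⟨fun d hd => ?_, by omega⟩
        have h2 := h d (Or.inr hd)
        have h3 := hPc d hd
        omega
      · rintro ⟨hjB, hjc⟩
        intro d hd
        rcases hd with rfl | hd
        · omega
        · have h2 := hjB d hd
          have h3 := hPc d hd
          omega
    have hLmass : blockMassAt n m (insert c S) ⟨c - 1, by omega⟩
        = ∑ j ∈ block n S i, if (j : ℕ) < c then m j else 0 := by
      unfold blockMassAt
      rw [hLset, Finset.sum_filter]
    have hRmass : blockMassAt n m (insert c S) ⟨c, hcn⟩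
        = ∑ j ∈ block n S i, if c ≤ (j : ℕ) then m j else 0 := by
      unfold blockMassAt
      rw [hRset, Finset.sum_filter]
    have hLpos : (0:ℝ) < ∑ j ∈ block n S i, if (j : ℕ) < c then m j else 0 := by
      rw [← hLmass]; exact blockMassAt_pos hm' _ _
    have hRpos : (0:ℝ) < ∑ j ∈ block n S i, if c ≤ (j : ℕ) then m j else 0 := by
      rw [← hRmass]; exact blockMassAt_pos hm' _ _
    have hbv : bvec n m (insert c S) c i
        = if c ≤ (i : ℕ) then 1 / (∑ j ∈ block n S i, if c ≤ (j : ℕ) then m j else 0)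
          else -1 / (∑ j ∈ block n S i, if (j : ℕ) < c then m j else 0) := by
      unfold bvec
      rw [dif_pos (⟨hc0, hcn⟩ : 0 < c ∧ c < n)]
      by_cases hci : c ≤ (i : ℕ)
      · have hneg1 : ¬ (∀ d ∈ insert c S, ((d : ℕ) ≤ (i : ℕ) ↔ d ≤ c - 1)) := by
          intro h
          have h2 := h c (Finset.mem_insert_self c S)
          omega
        have hpos2 : ∀ d ∈ insert c S, ((d : ℕ) ≤ (i : ℕ) ↔ d ≤ c) := by
          intro d hd
          rcases Finset.mem_insert.1 hd with rfl | hd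
          · omega
          · exact (hPc d hd).symm
        rw [if_neg hneg1, if_pos hpos2, if_pos hci, hRmass]
      · have hpos1 : ∀ d ∈ insert c S, ((d : ℕ) ≤ (i : ℕ) ↔ d ≤ c - 1) := by
          intro d hd
          rcases Finset.mem_insert.1 hd with rfl | hd
          · omega
          · have h3 := hPc d hd
            have hne : d ≠ c := fun e => hns (e ▸ hd)
            omega
        rw [if_pos hpos1, if_neg hci, hLmass]
    have hcsi : cSigma n m ς (insert c S)
        = cSigma n m ς S / blockMassAt n m S i *
            ((∑ j ∈ block n S i, if (j : ℕ) < c then m j else 0) *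
              (∑ j ∈ block n S i, if c ≤ (j : ℕ) then m j else 0)) *
            (sigAt n ς c - sigAt n ς (c - 1)) := by
      rw [cSigma_insert m ς hm' hS hc0 hcn hns, hmBc, hLmass, hRmass]
    rw [hbv, hcsi]
    unfold Waux
    by_cases hci : c ≤ (i : ℕ)
    · rw [if_pos hci, if_pos hci]
      field_simp
    · rw [if_neg hci, if_neg hci]
      field_simp
  -- Key combinatorial identity
  have KEY : ∑ c ∈ T, (sigAt n ς c - sigAt n ς (c - 1)) * Waux n m S i c
      = ∑ j ∈ block n S i, m j * (ς i - ς j) := by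
    have hinner : ∀ c ∈ T, (sigAt n ς c - sigAt n ς (c - 1)) * Waux n m S i c
        = ∑ j ∈ block n S i, Faux n m ς i c j := by
      intro c hc
      unfold Waux Faux
      by_cases hci : c ≤ (i : ℕ)
      · simp only [if_pos hci, Finset.mul_sum]
      · simp only [if_neg hci, mul_neg, Finset.mul_sum, Finset.sum_neg_distrib]
    rw [Finset.sum_congr rfl hinner, Finset.sum_comm]
    apply Finset.sum_congr rfl
    intro j hjB
    have hj := mem_block.1 hjB
    have hjn := j.isLt
    rcases le_or_gt (j : ℕ) (i : ℕ) with hji | hij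
    · -- j ≤ i : telescoping over Ioc j i
      have hsub : Finset.Ioc (j : ℕ) (i : ℕ) ⊆ T := by
        intro c hc
        obtain ⟨h1, h2⟩ := Finset.mem_Ioc.1 hc
        refine Finset.mem_filter.2 ⟨Finset.mem_sdiff.2
          ⟨Finset.mem_Ioo.2 ⟨by omega, by omega⟩, ?_⟩, ?_⟩
        · intro hcs
          have := hj c hcs
          omega
        · intro d hd
          have := hj d hd
          omega
      have hz : ∀ c ∈ T, c ∉ Finset.Ioc (j : ℕ) (i : ℕ) → Faux n m ς i c j = 0 := by
        intro c _ hnc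
        rw [Finset.mem_Ioc] at hnc
        by_cases hci : c ≤ (i : ℕ)
        · have h4 : ¬ ((j : ℕ) < c) := by omega
          simp [Faux, hci, h4]
        · have h4 : ¬ (c ≤ (j : ℕ)) := by omega
          simp [Faux, hci, h4]
      rw [← Finset.sum_subset hsub hz]
      have hcong : ∀ c ∈ Finset.Ioc (j : ℕ) (i : ℕ),
          Faux n m ς i c j = m j * (sigAt n ς c - sigAt n ς (c - 1)) := by
        intro c hc
        obtain ⟨h1, h2⟩ := Finset.mem_Ioc.1 hc
        simp [Faux, h1, h2, mul_comm]
      rw [Finset.sum_congr rfl hcong, ← Finset.mul_sum, tele ς hji hin, sigAt_coe, sigAt_coe]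
    · -- i < j : telescoping over Ioc i j
      have hsub : Finset.Ioc (i : ℕ) (j : ℕ) ⊆ T := by
        intro c hc
        obtain ⟨h1, h2⟩ := Finset.mem_Ioc.1 hc
        refine Finset.mem_filter.2 ⟨Finset.mem_sdiff.2
          ⟨Finset.mem_Ioo.2 ⟨by omega, by omega⟩, ?_⟩, ?_⟩
        · intro hcs
          have := hj c hcs
          omega
        · intro d hd
          have := hj d hd
          omega
      have hz : ∀ c ∈ T, c ∉ Finset.Ioc (i : ℕ) (j : ℕ) → Faux n m ς i c j = 0 := by
        intro c _ hnc
        rw [Finset.mem_Ioc] at hnc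
        by_cases hci : c ≤ (i : ℕ)
        · have h4 : ¬ ((j : ℕ) < c) := by omega
          simp [Faux, hci, h4]
        · have h4 : ¬ (c ≤ (j : ℕ)) := by omega
          simp [Faux, hci, h4]
      rw [← Finset.sum_subset hsub hz]
      have hcong : ∀ c ∈ Finset.Ioc (i : ℕ) (j : ℕ),
          Faux n m ς i c j = -(m j * (sigAt n ς c - sigAt n ς (c - 1))) := by
        intro c hc
        obtain ⟨h1, h2⟩ := Finset.mem_Ioc.1 hc
        have h3 : ¬ (c ≤ (i : ℕ)) := by omega
        simp only [Faux, if_neg h3, if_pos h2, mul_neg]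
        ring
      rw [Finset.sum_congr rfl hcong, Finset.sum_neg_distrib, ← Finset.mul_sum,
        tele ς hij.le hjn, sigAt_coe, sigAt_coe]
      ring
  -- assemble
  have hsum2 : ∑ j ∈ block n S i, m j * (ς i - ς j)
      = blockMassAt n m S i * ς i - ∑ j ∈ block n S i, m j * ς j := by
    unfold blockMassAt
    rw [Finset.sum_mul, ← Finset.sum_sub_distrib]
    apply Finset.sum_congr rfl
    intros
    ring
  unfold bS Pmat
  rw [hsum1, Finset.sum_congr rfl hterm, ← Finset.mul_sum, ← mul_assoc,
    one_div_mul_cancel (ne_of_gt hcSpos), one_mul, ← Finset.sum_div, KEY, hsum2, sub_div,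
    mul_div_cancel_left₀ _ (ne_of_gt hmBpos)]

end
end

section
/- Let g ∈ L₂^↑ and let h ∈ L₂^↑ be a step function (♯h < ∞). Then pr_g h is also a step function; that is, the conditional expectation E(h | σ*(g)) on ([0,1], leb) has a version taking only finitely many values. -/
open MeasureTheory Set Filter

noncomputable section

/-- Lebesgue measure on `[0,1]`. -/
def leb : Measure ℝ := volume.restrict (Set.Icc (0:ℝ) 1)

theorem leb_def : leb = volume.restrict (Set.Icc (0:ℝ) 1) := rfl

instance : IsFiniteMeasure leb := by
  constructor
  rw [leb_def, Measure.restrict_apply_univ]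
  exact measure_Icc_lt_top

/-- **Lemma 3.8.** For `g ∈ L₂^↑` and a step function `h ∈ L₂^↑`,
the conditional expectation `pr_g h = E(h | σ(g))` on `([0,1], leb)` has a version
taking only finitely many values. -/
theorem stmt_10 (g h : ℝ → ℝ) (hg : MonotoneOn g (Set.Icc 0 1)) (hgm : Measurable g)
    (hh : MonotoneOn h (Set.Icc 0 1)) (hstep : (h '' Set.Icc 0 1).Finite)
    (hh2 : MemLp h 2 leb) :
    ∃ f : ℝ → ℝ, (f '' Set.Icc 0 1).Finite ∧
      leb[h | MeasurableSpace.comap g (borel ℝ)] =ᵐ[leb] f := by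
  classical
  have hIcc : MeasurableSet (Icc (0:ℝ) 1) := measurableSet_Icc
  have haeIcc : ∀ᵐ x ∂leb, x ∈ Icc (0:ℝ) 1 := ae_restrict_mem hIcc
  -- clamp function
  set c : ℝ → ℝ := fun x => max 0 (min 1 x) with hc_def
  have hcmem : ∀ x, c x ∈ Icc (0:ℝ) 1 :=
    fun x => ⟨le_max_left _ _, max_le zero_le_one (min_le_left _ _)⟩
  have hcid : ∀ x ∈ Icc (0:ℝ) 1, c x = x := by
    intro x hx
    simp only [hc_def]
    rw [min_eq_right hx.2, max_eq_right hx.1]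
  have hcmono : Monotone c := fun a b hab => max_le_max le_rfl (min_le_min le_rfl hab)
  set G : ℝ → ℝ := fun x => g (c x) with hG_def
  set H : ℝ → ℝ := fun x => h (c x) with hH_def
  have hGmono : Monotone G := fun a b hab => hg (hcmem a) (hcmem b) (hcmono hab)
  have hHmono : Monotone H := fun a b hab => hh (hcmem a) (hcmem b) (hcmono hab)
  have hGm : Measurable G := hGmono.measurable
  have hHm : Measurable H := hHmono.measurable
  have hGeq : ∀ x ∈ Icc (0:ℝ) 1, G x = g x := by
    intro x hx; simp only [hG_def]; rw [hcid x hx]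
  have hHeq : ∀ x ∈ Icc (0:ℝ) 1, H x = h x := by
    intro x hx; simp only [hH_def]; rw [hcid x hx]
  have hHae : H =ᵐ[leb] h := haeIcc.mono fun x hx => hHeq x hx
  -- level sets
  set K : ℝ → Set ℝ := fun y => {z | G z = y} with hK_def
  have hKm : ∀ y, MeasurableSet (K y) := fun y => hGm (measurableSet_singleton y)
  set l : ℝ → ENNReal := fun y => leb (K y) with hl_def
  set ψ : ℝ → ℝ := fun y => ∫ z in K y, H z ∂leb with hψ_def
  set r : ℝ → ℝ := fun y => sSup (insert 0 {z ∈ Icc (0:ℝ) 1 | G z ≤ y}) with hr_def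
  have hbdd : ∀ y, BddAbove (insert 0 {z ∈ Icc (0:ℝ) 1 | G z ≤ y}) := by
    intro y
    refine ⟨1, ?_⟩
    intro w hw
    rcases mem_insert_iff.1 hw with rfl | hw'
    · exact zero_le_one
    · exact hw'.1.2
  have hrmem : ∀ y, r y ∈ Icc (0:ℝ) 1 := by
    intro y
    constructor
    · exact le_csSup (hbdd y) (mem_insert _ _)
    · refine csSup_le ⟨0, mem_insert _ _⟩ ?_
      intro w hw
      rcases mem_insert_iff.1 hw with rfl | hw'
      · exact zero_le_one
      · exact hw'.1.2
  have hrmono : Monotone r := by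
    intro a b hab
    refine csSup_le_csSup (hbdd b) ⟨0, mem_insert _ _⟩ ?_
    apply insert_subset_insert
    intro z hz
    exact ⟨hz.1, hz.2.trans hab⟩
  set θ : ℝ → ℝ := fun y => H (r y) with hθ_def
  have hθmono : Monotone θ := fun a b hab => hHmono (hrmono hab)
  have hθm : Measurable θ := hθmono.measurable
  -- key: null level sets are singletons within [0,1]
  have key : ∀ x ∈ Icc (0:ℝ) 1, l (G x) = 0 → ∀ z ∈ Icc (0:ℝ) 1, G z = G x → z = x := by
    intro x hx h0 z hz hGz
    by_contra hne
    have hij : ∀ a b : ℝ, a ∈ Icc (0:ℝ) 1 → b ∈ Icc (0:ℝ) 1 → G a = G x → G b = G x →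
        a < b → False := by
      intro a b ha hb hGa hGb hab
      have hsub : Icc a b ⊆ K (G x) ∩ Icc 0 1 := by
        intro w hw
        refine ⟨?_, ⟨ha.1.trans hw.1, hw.2.trans hb.2⟩⟩
        have h1 : G a ≤ G w := hGmono hw.1
        have h2 : G w ≤ G b := hGmono hw.2
        show G w = G x
        refine le_antisymm ?_ ?_
        · rw [← hGb]; exact h2
        · rw [← hGa]; exact h1
      have hpos : (0:ENNReal) < volume (Icc a b) := by
        rw [Real.volume_Icc]
        exact ENNReal.ofReal_pos.2 (by linarith)
      have hle : volume (Icc a b) ≤ l (G x) := by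
        show volume (Icc a b) ≤ leb (K (G x))
        rw [leb_def, Measure.restrict_apply (hKm _)]
        exact measure_mono hsub
      rw [h0] at hle
      exact hpos.ne' (le_antisymm hle zero_le)
    rcases lt_or_gt_of_ne hne with hlt | hlt
    · exact hij z x hz hx hGz rfl hlt
    · exact hij x z hx hz rfl hGz hlt
  have hrx : ∀ x ∈ Icc (0:ℝ) 1, l (G x) = 0 → r (G x) = x := by
    intro x hx h0
    refine le_antisymm (csSup_le ⟨0, mem_insert _ _⟩ ?_)
      (le_csSup (hbdd _) (mem_insert_iff.2 (Or.inr ⟨hx, le_rfl⟩)))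
    intro w hw
    rcases mem_insert_iff.1 hw with rfl | hw'
    · exact hx.1
    · rcases le_or_gt w x with hle | hlt
      · exact hle
      · exact (key x hx h0 w hw'.1 (le_antisymm hw'.2 (hGmono hlt.le))).le
  -- bound
  set C : ℝ := max |h 0| |h 1| with hC_def
  have hHbd : ∀ x, |H x| ≤ C := by
    intro x
    have h1 : h 0 ≤ H x := hh (left_mem_Icc.2 zero_le_one) (hcmem x) (hcmem x).1
    have h2 : H x ≤ h 1 := hh (hcmem x) (right_mem_Icc.2 zero_le_one) (hcmem x).2
    rw [abs_le]
    constructor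
    · calc -C ≤ -|h 0| := neg_le_neg (le_max_left _ _)
        _ ≤ h 0 := neg_abs_le _
        _ ≤ H x := h1
    · exact h2.trans ((le_abs_self _).trans (le_max_right _ _))
  have hHint : Integrable H leb :=
    ⟨hHm.aestronglyMeasurable,
      HasFiniteIntegral.of_bounded (C := C) (ae_of_all _ fun x => by
        simpa [Real.norm_eq_abs] using hHbd x)⟩
  have hhint : Integrable h leb := hHint.congr hHae
  -- measurability of l and ψ
  set T : Set (ℝ × ℝ) := {p : ℝ × ℝ | G p.2 = p.1} with hT_def
  have hTm : MeasurableSet T := measurableSet_eq_fun (hGm.comp measurable_snd) measurable_fst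
  have hlm : Measurable l := by
    have h1 := measurable_measure_prodMk_left (ν := leb) hTm
    have h2 : ∀ y : ℝ, leb (Prod.mk y ⁻¹' T) = l y := by
      intro y
      rfl
    simpa only [h2] using h1
  have hψm : Measurable ψ := by
    have hF : StronglyMeasurable fun p : ℝ × ℝ => T.indicator (fun q : ℝ × ℝ => H q.2) p :=
      ((hHm.comp measurable_snd).indicator hTm).stronglyMeasurable
    have h1 : StronglyMeasurable fun y => ∫ z, T.indicator (fun q : ℝ × ℝ => H q.2) (y, z) ∂leb :=
      hF.integral_prod_right'
    have h2 : ∀ y : ℝ, (∫ z, T.indicator (fun q : ℝ × ℝ => H q.2) (y, z) ∂leb) = ψ y := by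
      intro y
      have : ∀ z : ℝ, T.indicator (fun q : ℝ × ℝ => H q.2) (y, z) = (K y).indicator H z := by
        intro z
        by_cases hz : G z = y
        · rw [indicator_of_mem (by exact hz) (fun q : ℝ × ℝ => H q.2),
            indicator_of_mem (by exact hz)]
        · rw [indicator_of_notMem (by exact hz) (fun q : ℝ × ℝ => H q.2),
            indicator_of_notMem (by exact hz)]
      simp only [this]
      rw [integral_indicator (hKm y)]
    simpa only [h2] using h1.measurable
  -- the candidate function
  set φ : ℝ → ℝ := fun y => if l y = 0 then θ y else ψ y / (l y).toReal with hφ_def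
  have hφm : Measurable φ :=
    Measurable.ite (hlm (measurableSet_singleton 0)) hθm (hψm.div hlm.ennreal_toReal)
  have hφbd : ∀ y, |φ y| ≤ C := by
    intro y
    by_cases h0 : l y = 0
    · show |if l y = 0 then θ y else ψ y / (l y).toReal| ≤ C
      rw [if_pos h0]
      exact hHbd (r y)
    · show |if l y = 0 then θ y else ψ y / (l y).toReal| ≤ C
      rw [if_neg h0]
      have hlt : l y < ⊤ := measure_lt_top leb (K y)
      have hpos : 0 < (l y).toReal := ENNReal.toReal_pos h0 hlt.ne
      have hnorm : |ψ y| ≤ C * (l y).toReal := by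
        have := norm_setIntegral_le_of_norm_le_const (μ := leb) (s := K y) (f := H) (C := C)
          hlt (fun x _ => by simpa [Real.norm_eq_abs] using hHbd x)
        simpa [Real.norm_eq_abs, measureReal_def] using this
      rw [abs_div, abs_of_pos hpos, div_le_iff₀ hpos]
      exact hnorm
  have hφGint : Integrable (fun x => φ (G x)) leb :=
    ⟨(hφm.comp hGm).aestronglyMeasurable,
      HasFiniteIntegral.of_bounded (C := C) (ae_of_all _ fun x => by
        simpa [Real.norm_eq_abs] using hφbd (G x))⟩
  have hfae : (fun x => φ (g x)) =ᵐ[leb] fun x => φ (G x) :=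
    haeIcc.mono fun x hx => by show φ (g x) = φ (G x); rw [hGeq x hx]
  have hfint : Integrable (fun x => φ (g x)) leb := hφGint.congr hfae.symm
  -- countability of positive-measure level values
  have hYc : Set.Countable {y : ℝ | 0 < l y} := by
    have := Measure.countable_meas_level_set_pos (μ := leb) hGm
    simpa only [hl_def, hK_def] using this
  have hYm : MeasurableSet {y : ℝ | 0 < l y} := hYc.measurableSet
  -- main integral identity
  have hint_eq : ∀ B : Set ℝ, MeasurableSet B →
      ∫ x in G ⁻¹' B, φ (G x) ∂leb = ∫ x in G ⁻¹' B, H x ∂leb := by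
    intro B hB
    set Y : Set ℝ := {y : ℝ | 0 < l y} with hY_def
    have hsplit : G ⁻¹' B = G ⁻¹' (B ∩ Y) ∪ G ⁻¹' (B \ Y) := by
      rw [← preimage_union, inter_union_diff]
    have hdisj : Disjoint (G ⁻¹' (B ∩ Y)) (G ⁻¹' (B \ Y)) :=
      (disjoint_left.2 fun y hy1 hy2 => hy2.2 hy1.2).preimage G
    have hm1 : MeasurableSet (G ⁻¹' (B ∩ Y)) := hGm (hB.inter hYm)
    have hm2 : MeasurableSet (G ⁻¹' (B \ Y)) := hGm (hB.diff hYm)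
    have hpart2 : ∫ x in G ⁻¹' (B \ Y), φ (G x) ∂leb = ∫ x in G ⁻¹' (B \ Y), H x ∂leb := by
      apply setIntegral_congr_ae hm2
      filter_upwards [haeIcc] with x hx hxS
      have h0 : l (G x) = 0 := by
        by_contra hne
        exact hxS.2 ((zero_le).lt_of_ne (Ne.symm hne))
      show (if l (G x) = 0 then θ (G x) else ψ (G x) / (l (G x)).toReal) = H x
      rw [if_pos h0]
      show H (r (G x)) = H x
      rw [hrx x hx h0]
    have hpart1 : ∫ x in G ⁻¹' (B ∩ Y), φ (G x) ∂leb = ∫ x in G ⁻¹' (B ∩ Y), H x ∂leb := by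
      have hiU : G ⁻¹' (B ∩ Y) = ⋃ y : ↥(B ∩ Y), K (y : ℝ) := by
        ext z
        simp only [mem_preimage, mem_iUnion]
        constructor
        · intro hz
          exact ⟨⟨G z, hz⟩, rfl⟩
        · rintro ⟨y, hy⟩
          have : G z = (y : ℝ) := hy
          rw [this]
          exact y.2
      haveI : Countable ↥(B ∩ Y) := (hYc.mono inter_subset_right).to_subtype
      have hKdisj : Pairwise (Function.onFun Disjoint fun y : ↥(B ∩ Y) => K (y : ℝ)) := by
        intro y1 y2 hne
        refine disjoint_left.2 fun z hz1 hz2 => hne (Subtype.ext ?_)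
        have e1 : G z = (y1 : ℝ) := hz1
        have e2 : G z = (y2 : ℝ) := hz2
        rw [← e1, ← e2]
      rw [hiU, integral_iUnion (fun y => hKm _) hKdisj (hφGint.integrableOn),
        integral_iUnion (fun y => hKm _) hKdisj (hHint.integrableOn)]
      apply tsum_congr
      intro y
      have hy : 0 < l (y : ℝ) := y.2.2
      have hlt : l (y : ℝ) < ⊤ := measure_lt_top leb (K (y : ℝ))
      have ht0 : (l (y : ℝ)).toReal ≠ 0 := (ENNReal.toReal_pos hy.ne' hlt.ne).ne'
      have hconst : ∫ z in K (y : ℝ), φ (G z) ∂leb = (l (y : ℝ)).toReal • φ (y : ℝ) := by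
        rw [setIntegral_congr_fun (hKm _) (fun z hz => by
          show φ (G z) = φ (y : ℝ)
          rw [show G z = (y : ℝ) from hz])]
        rw [setIntegral_const]
        rfl
      rw [hconst]
      show (l (y : ℝ)).toReal • (if l (y : ℝ) = 0 then θ (y : ℝ)
        else ψ (y : ℝ) / (l (y : ℝ)).toReal) = ∫ z in K (y : ℝ), H z ∂leb
      rw [if_neg hy.ne', smul_eq_mul, mul_div_cancel₀ _ ht0]
    rw [hsplit, setIntegral_union hdisj hm2 (hφGint.integrableOn) (hφGint.integrableOn),
      setIntegral_union hdisj hm2 (hHint.integrableOn) (hHint.integrableOn), hpart1, hpart2]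
  -- the sub-σ-algebra
  have hbeq : Real.measurableSpace = borel ℝ := BorelSpace.measurable_eq
  have hm : MeasurableSpace.comap g (borel ℝ) ≤ Real.measurableSpace := by
    rintro s ⟨B, hB, rfl⟩
    exact hgm (hbeq ▸ hB)
  haveI : SigmaFinite (leb.trim hm) := by infer_instance
  have hgm' : @Measurable ℝ ℝ (MeasurableSpace.comap g (borel ℝ)) Real.measurableSpace g :=
    fun s hs => ⟨s, hbeq ▸ hs, rfl⟩
  have hmeas' : AEStronglyMeasurable[MeasurableSpace.comap g (borel ℝ)]
      (fun x => φ (g x)) leb :=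
    StronglyMeasurable.aestronglyMeasurable (hφm.comp hgm').stronglyMeasurable
  have hcond : leb[h | MeasurableSpace.comap g (borel ℝ)] =ᵐ[leb] fun x => φ (g x) := by
    refine (ae_eq_condExp_of_forall_setIntegral_eq hm hhint
      (fun s _ _ => hfint.integrableOn) ?_ hmeas').symm
    rintro s ⟨B, hB, rfl⟩ -
    have hBm : MeasurableSet B := hbeq ▸ hB
    have hset : g ⁻¹' B =ᵐ[leb] G ⁻¹' B := by
      rw [eventuallyEq_set]
      filter_upwards [haeIcc] with x hx
      simp only [mem_preimage]
      rw [hGeq x hx]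
    calc ∫ x in g ⁻¹' B, φ (g x) ∂leb
        = ∫ x in g ⁻¹' B, φ (G x) ∂leb := by
          apply setIntegral_congr_ae (hgm hBm)
          filter_upwards [haeIcc] with x hx _
          rw [hGeq x hx]
      _ = ∫ x in G ⁻¹' B, φ (G x) ∂leb := setIntegral_congr_set hset
      _ = ∫ x in G ⁻¹' B, H x ∂leb := hint_eq B hBm
      _ = ∫ x in g ⁻¹' B, H x ∂leb := setIntegral_congr_set hset.symm
      _ = ∫ x in g ⁻¹' B, h x ∂leb := by
          apply setIntegral_congr_ae (hgm hBm)
          filter_upwards [hHae] with x hx _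
          exact hx
  refine ⟨fun x => φ (g x), ?_, hcond⟩
  -- finiteness of the image
  set S : ℝ → Set ℝ := fun y => H '' (K y ∩ Icc 0 1) with hS_def
  have hSsub : ∀ y, S y ⊆ h '' Icc 0 1 := by
    rintro y v ⟨z, hz, rfl⟩
    exact ⟨z, hz.2, (hHeq z hz.2).symm⟩
  have hSfin : ∀ y, (S y).Finite := fun y => hstep.subset (hSsub y)
  set Cross : Set ℝ := {y : ℝ | 0 < l y ∧ ∃ a ∈ S y, ∃ b ∈ S y, a ≠ b} with hCross_def
  have hCrossFin : Cross.Finite := by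
    have keylt : ∀ y1 y2 : ℝ, y1 ∈ Cross → y2 ∈ Cross → y1 < y2 →
        (sInf (S y1), sSup (S y1)) ≠ (sInf (S y2), sSup (S y2)) := by
      intro y1 y2 h1 h2 hlt heq
      obtain ⟨a1, ha1, b1, hb1, hab1⟩ := h1.2
      obtain ⟨a2, ha2, b2, hb2, hab2⟩ := h2.2
      have hne1 : (S y1).Nonempty := ⟨a1, ha1⟩
      have hne2 : (S y2).Nonempty := ⟨a2, ha2⟩
      have hle : sSup (S y1) ≤ sInf (S y2) := by
        refine csSup_le hne1 fun a ha => le_csInf hne2 fun b hb => ?_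
        obtain ⟨u, hu, rfl⟩ := ha
        obtain ⟨w, hw, rfl⟩ := hb
        have huw : u ≤ w := by
          by_contra hc
          push_neg at hc
          have : G w ≤ G u := hGmono hc.le
          rw [show G u = y1 from hu.1, show G w = y2 from hw.1] at this
          exact absurd this (not_le.2 hlt)
        exact hHmono huw
      have hlt1 : sInf (S y1) < sSup (S y1) := by
        rcases lt_or_gt_of_ne hab1 with hab | hab
        · exact lt_of_le_of_lt (csInf_le (hSfin y1).bddBelow ha1)
            (lt_of_lt_of_le hab (le_csSup (hSfin y1).bddAbove hb1))
        · exact lt_of_le_of_lt (csInf_le (hSfin y1).bddBelow hb1)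
            (lt_of_lt_of_le hab (le_csSup (hSfin y1).bddAbove ha1))
      have e1 : sInf (S y1) = sInf (S y2) := congrArg Prod.fst heq
      have e2 : sSup (S y1) = sSup (S y2) := congrArg Prod.snd heq
      rw [e1, e2] at hlt1
      have : sInf (S y2) < sInf (S y2) := lt_of_lt_of_le hlt1 (e2 ▸ hle)
      exact lt_irrefl _ this
    have hinj : InjOn (fun y => (sInf (S y), sSup (S y))) Cross := by
      intro y1 h1 y2 h2 heq
      by_contra hne
      rcases lt_or_gt_of_ne hne with hlt | hlt
      · exact keylt y1 y2 h1 h2 hlt heq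
      · exact keylt y2 y1 h2 h1 hlt heq.symm
    have himg : (fun y => (sInf (S y), sSup (S y))) '' Cross ⊆
        (h '' Icc 0 1) ×ˢ (h '' Icc 0 1) := by
      rintro p ⟨y, hy, rfl⟩
      obtain ⟨a, ha, b, hb, -⟩ := hy.2
      have hne : (S y).Nonempty := ⟨a, ha⟩
      exact ⟨hSsub y (hne.csInf_mem (hSfin y)), hSsub y (hne.csSup_mem (hSfin y))⟩
    exact Set.Finite.of_finite_image ((hstep.prod hstep).subset himg) hinj
  have hmain : (fun x => φ (g x)) '' Icc 0 1 ⊆ (h '' Icc 0 1) ∪ (φ '' Cross) := by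
    rintro v ⟨x, hx, rfl⟩
    have hgx : g x = G x := (hGeq x hx).symm
    show φ (g x) ∈ _
    rw [hgx]
    by_cases h0 : l (G x) = 0
    · left
      have : φ (G x) = H (r (G x)) := if_pos h0
      rw [this, hrx x hx h0, hHeq x hx]
      exact ⟨x, hx, rfl⟩
    · have hy : 0 < l (G x) := (zero_le).lt_of_ne (Ne.symm h0)
      by_cases hconst : ∀ a ∈ S (G x), ∀ b ∈ S (G x), a = b
      · left
        have hxK : x ∈ K (G x) ∩ Icc 0 1 := ⟨rfl, hx⟩
        have hlt : l (G x) < ⊤ := measure_lt_top leb (K (G x))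
        have ht0 : (l (G x)).toReal ≠ 0 := (ENNReal.toReal_pos h0 hlt.ne).ne'
        have hψval : ψ (G x) = (l (G x)).toReal • H x := by
          show (∫ z in K (G x), H z ∂leb) = (l (G x)).toReal • H x
          rw [setIntegral_congr_ae (hKm _) (g := fun _ => H x) ?_]
          · exact setIntegral_const (H x)
          · filter_upwards [haeIcc] with z hz hzK
            exact hconst (H z) ⟨z, ⟨hzK, hz⟩, rfl⟩ (H x) ⟨x, hxK, rfl⟩
        have hval : φ (G x) = H x := by
          show (if l (G x) = 0 then θ (G x) else ψ (G x) / (l (G x)).toReal) = H x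
          rw [if_neg h0, hψval, smul_eq_mul, mul_comm, mul_div_assoc, div_self ht0, mul_one]
        rw [hval, hHeq x hx]
        exact ⟨x, hx, rfl⟩
      · right
        push_neg at hconst
        obtain ⟨a, ha, b, hb, hab⟩ := hconst
        exact ⟨G x, ⟨hy, a, ha, b, hb, hab⟩, rfl⟩
  exact (hstep.union (hCrossFin.image φ)).subset hmain






end
end

section
/- Let g ∈ D^↑ be square integrable. Then the following are equivalent: (a) there exists a σ(ξ)-measurable function f : [0,1] → ℝ with f = g Lebesgue-a.e. (i.e. g is σ*(ξ)-measurable as an element of L₂); (b) for all 0 ≤ a < b ≤ 1, ξ(a) = ξ(b) implies g(a) = g(b−). -/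
open MeasureTheory Set Filter

noncomputable section

/-- The left limit of a monotone function at `b`, computed from its values on `[0, b)`
(`g(b−) = sup g([0,b))` for non-decreasing right-continuous `g`). -/
def leftLim01 (h : ℝ → ℝ) (b : ℝ) : ℝ := sSup (h '' Set.Ico 0 b)

/-- `g` belongs to `D^↑`: it is non-decreasing on `[0,1]`, right-continuous at every
point of `[0,1)` and continuous at `1` (within `[0,1]`). -/
def IsDup (g : ℝ → ℝ) : Prop :=
  MonotoneOn g (Set.Icc 0 1) ∧
  (∀ s ∈ Set.Ico (0:ℝ) 1, Filter.Tendsto g (nhdsWithin s (Set.Icc s 1)) (nhds (g s))) ∧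
  Filter.Tendsto g (nhdsWithin 1 (Set.Icc 0 1)) (nhds (g 1))

lemma leb_Ico {x y : ℝ} (hx : 0 ≤ x) (hy : y ≤ 1) :
    leb (Set.Ico x y) = ENNReal.ofReal (y - x) := by
  rw [leb, Measure.restrict_apply' measurableSet_Icc, Set.inter_eq_left.mpr, Real.volume_Ico]
  intro z hz
  exact ⟨le_trans hx hz.1, le_trans (le_of_lt hz.2) hy⟩

/-- **Proposition A.1.** A square-integrable `g ∈ D^↑` is
`σ*(ξ)`-measurable (has a `σ(ξ)`-measurable a.e. version) if and only if
`ξ(a) = ξ(b)` implies `g(a) = g(b−)` for all `0 ≤ a < b ≤ 1`. -/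
theorem stmt_12 (ξ : StieltjesFunction ℝ)
    (hξ0 : ∀ x ≤ (0:ℝ), ξ x = ξ 0) (hξ1 : ∀ x, (1:ℝ) ≤ x → ξ x = ξ 1)
    (hξc : ContinuousAt ξ 1)
    (g : ℝ → ℝ) (hD : IsDup g) (hg2 : MemLp g 2 leb) :
    (∃ f : ℝ → ℝ, Measurable[MeasurableSpace.comap ξ (borel ℝ)] f ∧ f =ᵐ[leb] g) ↔
    (∀ a b : ℝ, 0 ≤ a → a < b → b ≤ 1 → ξ a = ξ b → g a = leftLim01 g b) := by
  obtain ⟨hmono, hrc, -⟩ := hD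
  constructor
  · rintro ⟨f, hfm, hfe⟩ a b ha hab hb hξab
    have hbdd : BddAbove (g '' Set.Ico 0 b) := by
      refine ⟨g 1, ?_⟩
      rintro y ⟨s, hs, rfl⟩
      exact hmono ⟨hs.1, le_trans (le_of_lt hs.2) hb⟩ ⟨zero_le_one, le_refl 1⟩
        (le_trans (le_of_lt hs.2) hb)
    have hamem : a ∈ Set.Ico (0:ℝ) b := ⟨ha, hab⟩
    refine le_antisymm (le_csSup hbdd ⟨a, hamem, rfl⟩) ?_
    refine csSup_le ⟨g a, ⟨a, hamem, rfl⟩⟩ ?_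
    rintro y ⟨s, ⟨hs0, hsb⟩, rfl⟩
    by_contra hlt
    push_neg at hlt
    -- so `g a < g s` with `a < s < b`; derive a contradiction
    have hs1 : s ≤ 1 := le_trans (le_of_lt hsb) hb
    have has : a < s := by
      by_contra hsa
      push_neg at hsa
      exact absurd (hmono ⟨hs0, hs1⟩ ⟨ha, le_trans hab.le hb⟩ hsa) (not_le.mpr hlt)
    set v : ℝ := (g a + g s) / 2 with hv
    have hv1 : g a < v := by simp only [hv]; linarith
    have hv2 : v < g s := by simp only [hv]; linarith
    -- `f` is constant on `[a, b]`
    have hconst : ∀ t ∈ Set.Icc a b, f t = f a := by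
      intro t ht
      have hξt : ξ t = ξ a := le_antisymm (hξab ▸ ξ.mono ht.2) (ξ.mono ht.1)
      obtain ⟨B, hB, hpre⟩ :=
        MeasurableSpace.measurableSet_comap.mp (hfm (measurableSet_singleton (f t)))
      have htB : t ∈ ξ ⁻¹' B := by rw [hpre]; exact rfl
      have haB : a ∈ ξ ⁻¹' B := by simpa [Set.mem_preimage, ← hξt] using htB
      have : a ∈ f ⁻¹' {f t} := hpre ▸ haB
      simpa using this.symm
    -- points where `f = g` exist in every positive-measure set
    have key : ∀ E : Set ℝ, 0 < leb E → ∃ t ∈ E, f t = g t := by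
      intro E hE
      by_contra hcon
      push_neg at hcon
      have hsub : E ⊆ {x | ¬ f x = g x} := fun x hx => hcon x hx
      have h0 : leb {x | ¬ f x = g x} = 0 := ae_iff.mp hfe
      exact absurd (le_trans (measure_mono hsub) h0.le) (not_le.mpr hE)
    -- a set near `a` where `g < v`
    have hev : ∀ᶠ x in nhdsWithin a (Set.Icc a 1), g x < v :=
      (hrc a ⟨ha, lt_of_lt_of_le hab hb⟩).eventually_lt_const hv1
    rw [eventually_nhdsWithin_iff] at hev
    obtain ⟨δ, hδ, hball⟩ := Metric.eventually_nhds_iff_ball.mp hev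
    set m : ℝ := min (a + δ) s with hm
    have ham : a < m := lt_min (by linarith) has
    have hE1 : ∀ t ∈ Set.Ico a m, g t < v := by
      intro t ht
      have ht1 : t ≤ 1 := le_trans (le_of_lt (lt_of_lt_of_le ht.2 (min_le_right _ _))) hs1
      refine hball t ?_ ⟨ht.1, ht1⟩
      rw [Metric.mem_ball, Real.dist_eq, abs_of_nonneg (by linarith [ht.1])]
      have := lt_of_lt_of_le ht.2 (min_le_left _ _)
      linarith
    have hE2 : ∀ u ∈ Set.Ico s b, v < g u := by
      intro u hu
      have hu1 : u ≤ 1 := le_trans (le_of_lt hu.2) hb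
      exact lt_of_lt_of_le hv2 (hmono ⟨hs0, hs1⟩ ⟨le_trans hs0 hu.1, hu1⟩ hu.1)
    obtain ⟨t, ht, hft⟩ := key (Set.Ico a m) (by
      rw [leb_Ico ha (le_trans (le_of_lt (lt_of_le_of_lt (min_le_right _ _) hsb)) hb)]
      exact ENNReal.ofReal_pos.mpr (by linarith))
    obtain ⟨u, hu, hfu⟩ := key (Set.Ico s b) (by
      rw [leb_Ico hs0 hb]
      exact ENNReal.ofReal_pos.mpr (by linarith [hsb]))
    have h1 : f a = g t := by
      rw [← hft, hconst t ⟨ht.1, le_trans (le_of_lt (lt_of_lt_of_le ht.2 (min_le_right _ _)))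
        (le_of_lt hsb)⟩]
    have h2 : f a = g u := by
      rw [← hfu, hconst u ⟨le_trans has.le hu.1, hu.2.le⟩]
    have := hE1 t ht
    have := hE2 u hu
    rw [h1] at h2
    linarith
  · intro h
    classical
    set A : ℝ → Set ℝ := fun y => {s ∈ Set.Icc (0:ℝ) 1 | y ≤ ξ s} ∪ {1} with hA
    have hA1 : ∀ y, (1:ℝ) ∈ A y := fun y => Or.inr rfl
    have hAbdd : ∀ y, BddBelow (A y) := by
      intro y
      refine ⟨0, ?_⟩
      rintro x (⟨⟨h0, _⟩, -⟩ | rfl)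
      · exact h0
      · exact zero_le_one
    set T : ℝ → ℝ := fun y => sInf (A y) with hT
    have hT01 : ∀ y, T y ∈ Set.Icc (0:ℝ) 1 := by
      intro y
      exact ⟨le_csInf ⟨1, hA1 y⟩ (by rintro x (⟨⟨h0, -⟩, -⟩ | rfl); exacts [h0, zero_le_one]),
        csInf_le (hAbdd y) (hA1 y)⟩
    have hTmono : Monotone T := by
      intro y y' hyy'
      refine csInf_le_csInf (hAbdd y) ⟨1, hA1 y'⟩ ?_
      rintro x (⟨hx, hle⟩ | rfl)
      · exact Or.inl ⟨hx, le_trans hyy' hle⟩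
      · exact Or.inr rfl
    have hgT : Monotone fun y => g (T y) :=
      fun y y' hyy' => hmono (hT01 y) (hT01 y') (hTmono hyy')
    refine ⟨fun t => g (T (ξ t)), ?_, ?_⟩
    · have hξm : @Measurable ℝ ℝ (MeasurableSpace.comap ξ (borel ℝ)) _ ξ := by
        intro s hs
        rw [MeasurableSpace.measurableSet_comap]
        exact ⟨s, (BorelSpace.measurable_eq (α := ℝ)) ▸ hs, rfl⟩
      exact hgT.measurable.comp hξm
    · -- a.e. equality
      set D : Set ℝ := {t : ℝ | t ∈ Set.Ioc (0:ℝ) 1 ∧ sSup (g '' Set.Ico 0 t) ≠ g t} with hDdef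
      have hbdd : ∀ t : ℝ, t ≤ 1 → BddAbove (g '' Set.Ico 0 t) := by
        intro t ht1
        refine ⟨g 1, ?_⟩
        rintro y ⟨s, hs, rfl⟩
        exact hmono ⟨hs.1, le_trans hs.2.le ht1⟩ ⟨zero_le_one, le_refl 1⟩ (le_trans hs.2.le ht1)
      have hDcnt : Set.Countable D := by
        have hlt : ∀ t ∈ D, sSup (g '' Set.Ico 0 t) < g t := by
          rintro t ⟨⟨ht0, ht1⟩, hne⟩
          refine lt_of_le_of_ne ?_ hne
          refine csSup_le ⟨g 0, ⟨0, ⟨le_rfl, ht0⟩, rfl⟩⟩ ?_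
          rintro y ⟨s, ⟨hs0, hst⟩, rfl⟩
          exact hmono ⟨hs0, le_trans hst.le ht1⟩ ⟨le_trans hs0 hst.le, ht1⟩ hst.le
        have hq : ∀ t ∈ D, ∃ q : ℚ, sSup (g '' Set.Ico 0 t) < (q:ℝ) ∧ (q:ℝ) < g t :=
          fun t ht => exists_rat_btwn (hlt t ht)
        choose! q hq1 hq2 using hq
        have hsm : ∀ t ∈ D, ∀ t' ∈ D, t < t' → q t < q t' := by
          intro t ht t' ht' htt'
          have h1 : g t ≤ sSup (g '' Set.Ico 0 t') :=
            le_csSup (hbdd t' ht'.1.2) ⟨t, ⟨ht.1.1.le, htt'⟩, rfl⟩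
          have : (q t : ℝ) < (q t' : ℝ) := lt_of_lt_of_le (hq2 t ht)
            (le_trans h1 (hq1 t' ht').le)
          exact_mod_cast this
        have hinj : Set.InjOn q D := by
          intro t ht t' ht' he
          rcases lt_trichotomy t t' with hlt' | heq | hgt
          · exact absurd he (ne_of_lt (hsm t ht t' ht' hlt'))
          · exact heq
          · exact absurd he.symm (ne_of_lt (hsm t' ht' t ht hgt))
        exact Set.countable_of_injective_of_countable_image hinj (Set.to_countable _)
      haveI : NullSingletonClass leb := inferInstanceAs (NullSingletonClass (volume.restrict (Set.Icc (0:ℝ) 1)))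
      have hnull : leb D = 0 := hDcnt.measure_zero leb
      have hmem : ∀ᵐ t ∂leb, t ∈ Set.Icc (0:ℝ) 1 := ae_restrict_mem measurableSet_Icc
      have hD0 : ∀ᵐ t ∂leb, t ∉ D := measure_eq_zero_iff_ae_notMem.mp hnull
      filter_upwards [hmem, hD0] with t ht htD
      show g (T (ξ t)) = g t
      have hmemA : t ∈ A (ξ t) := Or.inl ⟨ht, le_rfl⟩
      have hat : T (ξ t) ≤ t := csInf_le (hAbdd _) hmemA
      have ha0 : 0 ≤ T (ξ t) := (hT01 _).1
      have hξat : ξ (T (ξ t)) = ξ t := by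
        refine le_antisymm (ξ.mono hat) ?_
        have hgt : ∀ s ∈ Set.Ioi (T (ξ t)), ξ t ≤ ξ s := by
          intro s hs
          obtain ⟨u, hu, hus⟩ := exists_lt_of_csInf_lt ⟨1, hA1 _⟩ hs
          rcases hu with ⟨-, hle⟩ | rfl
          · exact le_trans hle (ξ.mono hus.le)
          · rw [hξ1 s hus.le]
            exact ξ.mono ht.2
        have h2 : Tendsto ξ (nhdsWithin (T (ξ t)) (Set.Ioi (T (ξ t)))) (nhds (ξ (T (ξ t)))) :=
          (ξ.right_continuous (T (ξ t))).tendsto.mono_left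
            (nhdsWithin_mono _ Set.Ioi_subset_Ici_self)
        exact ge_of_tendsto h2 (eventually_nhdsWithin_of_forall hgt)
      rcases eq_or_lt_of_le hat with heq | hlt
      · rw [heq]
      · have hkey := h (T (ξ t)) t ha0 hlt ht.2 hξat
        have ht0 : 0 < t := lt_of_le_of_lt ha0 hlt
        have hsup : sSup (g '' Set.Ico 0 t) = g t := by
          by_contra hne
          exact htD ⟨⟨ht0, ht.2⟩, hne⟩
        rw [hkey, leftLim01, hsup]
end
end

section
/- Let f ∈ C¹(ℝ^k). Then (i) the multivariate Bernstein polynomials Bₙ(f;·) converge uniformly to f on [0,1]^k as n → ∞; and (ii) for each i ∈ {1,…,k}, the partial derivatives ∂ᵢBₙ(f;·) converge uniformly to ∂ᵢf on [0,1]^k as n → ∞. -/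
open Filter

noncomputable section

/-- The multivariate Bernstein polynomial of order `n` of `f : [0,1]^k → ℝ`:
`Bₙ(f;x) = Σ_{j₁,…,j_k=0}^{n} f(j₁/n,…,j_k/n) ∏ᵢ C(n,jᵢ) xᵢ^{jᵢ} (1−xᵢ)^{n−jᵢ}`. -/
def bernsteinPoly (k : ℕ) (f : (Fin k → ℝ) → ℝ) (n : ℕ) (x : Fin k → ℝ) : ℝ :=
  ∑ j : Fin k → Fin (n + 1), f (fun i => (j i : ℝ) / n) *
    ∏ i, (n.choose (j i) : ℝ) * x i ^ (j i : ℕ) * (1 - x i) ^ (n - (j i : ℕ))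

namespace Stmt13
open Finset


/-- 1D Bernstein weight of degree `m`. -/
def P (m a : ℕ) (y : ℝ) : ℝ := (m.choose a : ℝ) * y ^ a * (1 - y) ^ (m - a)

lemma P_nonneg {m a : ℕ} {y : ℝ} (hy : y ∈ Set.Icc (0:ℝ) 1) : 0 ≤ P m a y := by
  have h1 : (0:ℝ) ≤ y := hy.1
  have h2 : (0:ℝ) ≤ 1 - y := by linarith [hy.2]
  unfold P; positivity

lemma sum_P (m : ℕ) {y : ℝ} (hy : y ∈ Set.Icc (0:ℝ) 1) :
    ∑ a : Fin (m + 1), P m a y = 1 := by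
  have := bernstein.probability m ⟨y, hy⟩
  simpa [P, bernstein_apply] using this

lemma variance_P {m : ℕ} (hm : 1 ≤ m) {y : ℝ} (hy : y ∈ Set.Icc (0:ℝ) 1) :
    ∑ a : Fin (m + 1), ((a : ℝ) / m - y) ^ 2 * P m a y = y * (1 - y) / m := by
  have hm' : 0 < (m : ℝ) := by exact_mod_cast hm
  have := bernstein.variance (n := m) (by omega) ⟨y, hy⟩
  simp only [bernstein_apply, bernstein.z] at this
  rw [← this]
  apply Finset.sum_congr rfl
  intro a _
  rw [show ((a:ℝ)/m - y)^2 = (y - (a:ℝ)/m)^2 by ring]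
  rfl

lemma tail_P {m : ℕ} (hm : 1 ≤ m) {y δ : ℝ} (hy : y ∈ Set.Icc (0:ℝ) 1) (hδ : 0 < δ) :
    ∑ a : Fin (m + 1), (if δ ≤ |(a : ℝ) / m - y| then P m a y else 0)
      ≤ 1 / (4 * m * δ ^ 2) := by
  have hstep : ∀ a : Fin (m+1), (if δ ≤ |(a : ℝ) / m - y| then P m a y else 0)
      ≤ ((a : ℝ)/m - y)^2/δ^2 * P m a y := by
    intro a
    by_cases h : δ ≤ |(a : ℝ) / m - y|
    · rw [if_pos h]
      have h1 : δ^2 ≤ ((a : ℝ)/m - y)^2 := by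
        have := sq_abs ((a : ℝ)/m - y)
        nlinarith [abs_nonneg ((a : ℝ)/m - y)]
      have hP := P_nonneg (m := m) (a := a) hy
      have hd2 : 0 < δ^2 := by positivity
      have hone : 1 ≤ ((a : ℝ)/m - y)^2/δ^2 := by
        rw [le_div_iff₀ hd2]; linarith
      nlinarith
    · rw [if_neg h]
      have := P_nonneg (m := m) (a := a) hy
      positivity
  calc ∑ a : Fin (m + 1), (if δ ≤ |(a : ℝ) / m - y| then P m a y else 0)
      ≤ ∑ a : Fin (m+1), ((a : ℝ)/m - y)^2/δ^2 * P m a y := Finset.sum_le_sum fun a _ => hstep a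
    _ = (1/δ^2) * ∑ a : Fin (m+1), ((a : ℝ)/m - y)^2 * P m a y := by
        rw [Finset.mul_sum]; apply Finset.sum_congr rfl; intro a _; ring
    _ = (1/δ^2) * (y * (1-y)/m) := by rw [variance_P hm hy]
    _ ≤ (1/δ^2) * ((1/4)/m) := by
        have hm' : 0 < (m : ℝ) := by exact_mod_cast hm
        have h14 : y * (1 - y) ≤ 1/4 := by nlinarith [sq_nonneg (y - 1/2)]
        gcongr
    _ = 1 / (4 * m * δ ^ 2) := by
        field_simp


/-- Abstract core estimate for positive-weight approximation operators. -/
lemma core {k : ℕ} {ι : Type*} [Fintype ι] (W : ι → ℝ) (ξ : ι → Fin k → ℝ)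
    (c : ι → ℝ) (gx : ℝ) (x : Fin k → ℝ) (M ε δ η : ℝ) (hε : 0 ≤ ε)
    (hW0 : ∀ j, 0 ≤ W j) (hW1 : ∑ j, W j = 1)
    (hM : ∀ j, |c j| ≤ M) (hgx : |gx| ≤ M)
    (hclose : ∀ j, (∀ l, |ξ j l - x l| ≤ δ) → |c j - gx| ≤ ε)
    (htail : ∀ l : Fin k, ∑ j, (if δ ≤ |ξ j l - x l| then W j else 0) ≤ η) :
    |∑ j, c j * W j - gx| ≤ ε + 2 * M * (k * η) := by
  classical
  have hM0 : 0 ≤ M := le_trans (abs_nonneg _) hgx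
  have hsplit : ∑ j, c j * W j - gx = ∑ j, (c j - gx) * W j := by
    rw [show ∑ j, (c j - gx) * W j = ∑ j, c j * W j - gx * ∑ j, W j by
      rw [Finset.mul_sum, ← Finset.sum_sub_distrib]; apply Finset.sum_congr rfl; intros; ring]
    rw [hW1]; ring
  rw [hsplit]
  have habs : |∑ j, (c j - gx) * W j| ≤ ∑ j, |c j - gx| * W j := by
    refine (Finset.abs_sum_le_sum_abs _ _).trans ?_
    apply Finset.sum_le_sum; intro j _
    rw [abs_mul, abs_of_nonneg (hW0 j)]
  refine habs.trans ?_
  set good : Finset ι := univ.filter (fun j => ∀ l, |ξ j l - x l| ≤ δ) with hgood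
  have hsplit2 : ∑ j, |c j - gx| * W j
      = ∑ j ∈ good, |c j - gx| * W j + ∑ j ∈ goodᶜ, |c j - gx| * W j :=
    (Finset.sum_add_sum_compl good _).symm
  rw [hsplit2]
  have h1 : ∑ j ∈ good, |c j - gx| * W j ≤ ε := by
    calc ∑ j ∈ good, |c j - gx| * W j ≤ ∑ j ∈ good, ε * W j := by
          apply Finset.sum_le_sum; intro j hj
          rw [hgood, Finset.mem_filter] at hj
          exact mul_le_mul_of_nonneg_right (hclose j hj.2) (hW0 j)
      _ ≤ ∑ j, ε * W j := by
          apply Finset.sum_le_sum_of_subset_of_nonneg (Finset.subset_univ _)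
          intro j _ _
          exact mul_nonneg hε (hW0 j)
      _ = ε := by rw [← Finset.mul_sum, hW1, mul_one]
  have h2 : ∑ j ∈ goodᶜ, |c j - gx| * W j ≤ 2 * M * (k * η) := by
    have hbadsum : ∑ j ∈ goodᶜ, W j ≤ (k : ℝ) * η := by
      have hone : ∀ j ∈ goodᶜ, W j ≤ ∑ l : Fin k, (if δ ≤ |ξ j l - x l| then W j else 0) := by
        intro j hj
        rw [Finset.mem_compl, hgood, Finset.mem_filter] at hj
        push_neg at hj
        obtain ⟨l₀, hl₀⟩ := hj (Finset.mem_univ j)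
        have key := Finset.single_le_sum (f := fun l => if δ ≤ |ξ j l - x l| then W j else 0)
          (fun l _ => by by_cases h : δ ≤ |ξ j l - x l| <;> simp [h, hW0 j]) (Finset.mem_univ l₀)
        simpa [if_pos hl₀.le] using key
      calc ∑ j ∈ goodᶜ, W j ≤ ∑ j ∈ goodᶜ, ∑ l : Fin k, (if δ ≤ |ξ j l - x l| then W j else 0) :=
            Finset.sum_le_sum hone
        _ ≤ ∑ j, ∑ l : Fin k, (if δ ≤ |ξ j l - x l| then W j else 0) := by
            apply Finset.sum_le_sum_of_subset_of_nonneg (Finset.subset_univ _)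
            intro j _ _
            apply Finset.sum_nonneg; intro l _
            split
            · exact hW0 j
            · exact le_refl 0
        _ = ∑ l : Fin k, ∑ j, (if δ ≤ |ξ j l - x l| then W j else 0) := Finset.sum_comm
        _ ≤ ∑ _l : Fin k, η := Finset.sum_le_sum fun l _ => htail l
        _ = (k : ℝ) * η := by rw [Finset.sum_const, card_univ, Fintype.card_fin, nsmul_eq_mul]
    calc ∑ j ∈ goodᶜ, |c j - gx| * W j ≤ ∑ j ∈ goodᶜ, 2 * M * W j := by
          apply Finset.sum_le_sum; intro j _
          apply mul_le_mul_of_nonneg_right _ (hW0 j)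
          calc |c j - gx| ≤ |c j| + |gx| := abs_sub _ _
            _ ≤ M + M := add_le_add (hM j) hgx
            _ = 2 * M := by ring
      _ = 2 * M * ∑ j ∈ goodᶜ, W j := by rw [Finset.mul_sum]
      _ ≤ 2 * M * ((k : ℝ) * η) := by
          apply mul_le_mul_of_nonneg_left hbadsum; positivity
  linarith



def Sv (n a : ℕ) (y : ℝ) : ℝ := if a = 0 then 0 else P (n-1) (a-1) y

lemma nat1 {n a : ℕ} (h1 : 1 ≤ a) (h2 : a ≤ n) :
    a * n.choose a = n * (n-1).choose (a-1) := by
  obtain ⟨b, rfl⟩ : ∃ b, a = b + 1 := ⟨a - 1, by omega⟩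
  obtain ⟨m, rfl⟩ : ∃ m, n = m + 1 := ⟨n - 1, by omega⟩
  simp only [Nat.add_sub_cancel]
  rw [mul_comm]
  have := Nat.add_one_mul_choose_eq m b
  simpa [Nat.succ_eq_add_one, mul_comm] using this.symm

lemma nat2 {n : ℕ} (a : ℕ) (hn : 1 ≤ n) :
    (n - a) * n.choose a = n * (n-1).choose a := by
  by_cases ha : a < n
  · obtain ⟨m, rfl⟩ : ∃ m, n = m + 1 := ⟨n - 1, by omega⟩
    have ham : a ≤ m := by omega
    simp only [Nat.add_sub_cancel]
    have hkey := Nat.add_one_mul_choose_eq m (m - a)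
    have he : m - a + 1 = m + 1 - a := by omega
    rw [he] at hkey
    rw [← Nat.choose_symm (by omega : a ≤ m + 1), ← Nat.choose_symm ham, hkey]
    exact Nat.mul_comm _ _
  · have h0 : n - a = 0 := by omega
    have h1 : (n-1).choose a = 0 := Nat.choose_eq_zero_of_lt (by omega)
    rw [h0, h1]; ring

lemma hasDerivAt_P {n : ℕ} (hn : 1 ≤ n) {a : ℕ} (ha : a ≤ n) (y : ℝ) :
    HasDerivAt (P n a) ((n:ℝ) * (Sv n a y - P (n-1) a y)) y := by
  have h1 : HasDerivAt (fun y : ℝ => y ^ a) ((a:ℝ) * y ^ (a-1)) y := hasDerivAt_pow a y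
  have hb : HasDerivAt (fun y : ℝ => 1 - y) (-1) y := (hasDerivAt_id y).const_sub 1
  have h2 : HasDerivAt (fun y : ℝ => (1 - y)^(n-a)) (-(((n-a : ℕ):ℝ) * (1-y)^(n-a-1))) y := by
    have := (hasDerivAt_pow (n-a) (1-y)).comp y hb
    refine this.congr_deriv ?_
    simp [mul_comm]
  have h3 := (h1.mul h2).const_mul ((n.choose a : ℝ))
  have hfun : P n a = fun y : ℝ => (n.choose a : ℝ) * (y ^ a * (1 - y)^(n-a)) := by
    funext y; unfold P; ring
  rw [hfun]
  refine h3.congr_deriv ?_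
  -- value identity
  rcases Nat.eq_zero_or_pos a with h0 | hpos
  · subst h0
    simp [Sv, P]
  · have hsv : Sv n a y = ((n-1).choose (a-1) : ℝ) * y^(a-1) * (1-y)^((n-1)-(a-1)) := by
      rw [Sv, if_neg (by omega), P]
    have he1 : (n-1)-(a-1) = n - a := by omega
    have he2 : n - a - 1 = n - 1 - a := by omega
    have e1 : ((a:ℝ)) * (n.choose a : ℝ) = (n:ℝ) * ((n-1).choose (a-1) : ℝ) := by
      exact_mod_cast congrArg (Nat.cast : ℕ → ℝ) (nat1 hpos ha)
    have e2 : (((n - a : ℕ)):ℝ) * (n.choose a:ℝ) = (n:ℝ) * ((n-1).choose a : ℝ) := by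
      exact_mod_cast congrArg (Nat.cast : ℕ → ℝ) (nat2 a hn)
    rw [hsv, he1, P]
    rw [← he2]
    linear_combination (y^(a-1)*(1-y)^(n-a)) * e1 - (y^a*(1-y)^(n-a-1)) * e2

lemma fderiv_bern (k : ℕ) (f : (Fin k → ℝ) → ℝ) {n : ℕ} (hn : 1 ≤ n) (x : Fin k → ℝ) (i : Fin k) :
    fderiv ℝ (bernsteinPoly k f n) x (Pi.single i 1)
      = ∑ j : Fin k → Fin (n+1), f (fun l => (j l : ℝ)/n) *
          ((n:ℝ) * (Sv n (j i) (x i) - P (n-1) (j i) (x i))) *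
          ∏ l ∈ univ.erase i, P n (j l) (x l) := by
  classical
  set coef : (Fin k → Fin (n+1)) → Fin k → ℝ := fun j l =>
    (n:ℝ) * (Sv n (j l) (x l) - P (n-1) (j l) (x l)) with hcoef
  set D : (Fin k → Fin (n+1)) → (Fin k → ℝ) →L[ℝ] ℝ := fun j =>
    ∑ l, (∏ l' ∈ univ.erase l, P n (j l') (x l')) •
      ((coef j l) • (ContinuousLinearMap.proj l : (Fin k → ℝ) →L[ℝ] ℝ)) with hD
  have hprod : ∀ j : Fin k → Fin (n+1),
      HasFDerivAt (fun x : Fin k → ℝ => ∏ l, P n (j l) (x l)) (D j) x := by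
    intro j
    apply HasFDerivAt.finset_prod
    intro l _
    exact (hasDerivAt_P hn (Nat.lt_succ_iff.mp (j l).isLt) (x l)).comp_hasFDerivAt x
      (hasFDerivAt_apply (𝕜 := ℝ) l x)
  have hB : HasFDerivAt (bernsteinPoly k f n)
      (∑ j : Fin k → Fin (n+1), f (fun l => (j l : ℝ)/n) • D j) x := by
    apply HasFDerivAt.fun_sum
    intro j _
    exact (hprod j).const_mul _
  rw [hB.fderiv]
  rw [ContinuousLinearMap.sum_apply]
  apply Finset.sum_congr rfl
  intro j _
  rw [ContinuousLinearMap.smul_apply, hD]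
  rw [ContinuousLinearMap.sum_apply]
  have hval : ∀ l : Fin k, ((∏ l' ∈ univ.erase l, P n (j l') (x l')) •
      ((coef j l) • (ContinuousLinearMap.proj l : (Fin k → ℝ) →L[ℝ] ℝ))) (Pi.single i 1)
      = (∏ l' ∈ univ.erase l, P n (j l') (x l')) * (coef j l * (if l = i then 1 else 0)) := by
    intro l
    rw [ContinuousLinearMap.smul_apply, ContinuousLinearMap.smul_apply,
      ContinuousLinearMap.proj_apply, Pi.single_apply]
    simp
  simp_rw [hval]
  rw [Finset.sum_eq_single i]
  · rw [if_pos rfl, mul_one, smul_eq_mul]; ring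
  · intro l _ hl; rw [if_neg hl, mul_zero, mul_zero]
  · intro h; exact absurd (Finset.mem_univ i) h



/-- grid node with `i`-th coordinate `b/n` and the rest given by `ρ`. -/
def node {k : ℕ} (n : ℕ) (i : Fin k) (b : ℕ) (ρ : {l : Fin k // l ≠ i} → Fin (n+1)) :
    Fin k → ℝ :=
  fun l => if h : l = i then (b : ℝ)/n else ((ρ ⟨l, h⟩ : ℕ) : ℝ)/n

lemma telescope1D {n : ℕ} (hn : 1 ≤ n) (g : ℕ → ℝ) (y : ℝ) :
    ∑ a ∈ range (n+1), g a * (Sv n a y - P (n-1) a y)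
      = ∑ a ∈ range n, (g (a+1) - g a) * P (n-1) a y := by
  have hS : ∑ a ∈ range (n+1), g a * Sv n a y = ∑ a ∈ range n, g (a+1) * P (n-1) a y := by
    rw [Finset.sum_range_succ' (fun a => g a * Sv n a y) n]
    have h0 : Sv n 0 y = 0 := by simp [Sv]
    have hsucc : ∀ a, Sv n (a+1) y = P (n-1) a y := fun a => by simp [Sv]
    simp only [h0, mul_zero, add_zero, hsucc]
  have hP : ∑ a ∈ range (n+1), g a * P (n-1) a y = ∑ a ∈ range n, g a * P (n-1) a y := by
    rw [Finset.sum_range_succ]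
    have : P (n-1) n y = 0 := by
      simp [P, Nat.choose_eq_zero_of_lt (by omega : n - 1 < n)]
    rw [this, mul_zero, add_zero]
  calc ∑ a ∈ range (n+1), g a * (Sv n a y - P (n-1) a y)
      = ∑ a ∈ range (n+1), (g a * Sv n a y - g a * P (n-1) a y) := by
        apply Finset.sum_congr rfl; intros; ring
    _ = ∑ a ∈ range (n+1), g a * Sv n a y - ∑ a ∈ range (n+1), g a * P (n-1) a y :=
        Finset.sum_sub_distrib _ _
    _ = ∑ a ∈ range n, g (a+1) * P (n-1) a y - ∑ a ∈ range n, g a * P (n-1) a y := by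
        rw [hS, hP]
    _ = ∑ a ∈ range n, (g (a+1) - g a) * P (n-1) a y := by
        rw [← Finset.sum_sub_distrib]; apply Finset.sum_congr rfl; intros; ring

lemma reindex {k n : ℕ} (hn : 1 ≤ n) (i : Fin k) (c : (Fin k → ℝ) → ℝ) (x : Fin k → ℝ) :
    ∑ j : Fin k → Fin (n+1), c (fun l => (j l : ℝ)/n) *
        ((n:ℝ) * (Sv n (j i) (x i) - P (n-1) (j i) (x i))) *
        ∏ l ∈ univ.erase i, P n (j l) (x l)
      = ∑ p : Fin n × ({l : Fin k // l ≠ i} → Fin (n+1)),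
          ((n:ℝ) * (c (node n i ((p.1 : ℕ)+1) p.2) - c (node n i (p.1 : ℕ) p.2))) *
          (P (n-1) (p.1 : ℕ) (x i) * ∏ l : {l : Fin k // l ≠ i}, P n (p.2 l) (x l.1)) := by
  classical
  set S := {l : Fin k // l ≠ i}
  set E := Equiv.funSplitAt i (Fin (n+1)) with hE
  set F : (Fin k → Fin (n+1)) → ℝ := fun j => c (fun l => (j l : ℝ)/n) *
        ((n:ℝ) * (Sv n (j i) (x i) - P (n-1) (j i) (x i))) *
        ∏ l ∈ univ.erase i, P n (j l) (x l) with hF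
  have step1 : ∑ j : Fin k → Fin (n+1), F j
      = ∑ p : Fin (n+1) × (S → Fin (n+1)), F (E.symm p) :=
    (Equiv.sum_comp E.symm F).symm
  have hWp : ∀ (a : Fin (n+1)) (ρ : S → Fin (n+1)), F (E.symm (a, ρ))
      = c (node n i (a : ℕ) ρ) * ((n:ℝ) * (Sv n (a : ℕ) (x i) - P (n-1) (a : ℕ) (x i))) *
        ∏ l : S, P n (ρ l) (x l.1) := by
    intro a ρ
    have hnode : (fun l => ((E.symm (a, ρ)) l : ℝ)/n) = node n i (a : ℕ) ρ := by
      funext l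
      rw [Equiv.funSplitAt_symm_apply]
      unfold node
      by_cases h : l = i
      · rw [dif_pos h, dif_pos h]
      · rw [dif_neg h, dif_neg h]
    have hi : ((E.symm (a, ρ)) i : ℕ) = (a : ℕ) := by
      rw [Equiv.funSplitAt_symm_apply, dif_pos rfl]
    have hprod : ∏ l ∈ univ.erase i, P n ((E.symm (a, ρ)) l) (x l)
        = ∏ l : S, P n (ρ l) (x l.1) := by
      rw [Finset.prod_subtype (univ.erase i) (p := fun l => l ≠ i)
        (fun l => by simp [Finset.mem_erase])]
      apply Finset.prod_congr rfl
      intro l _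
      congr 1
      rw [Equiv.funSplitAt_symm_apply, dif_neg l.2]
    rw [hF]
    simp only [hnode, hi, hprod]
  set G : Fin n × (S → Fin (n+1)) → ℝ := fun p =>
          ((n:ℝ) * (c (node n i ((p.1 : ℕ)+1) p.2) - c (node n i (p.1 : ℕ) p.2))) *
          (P (n-1) (p.1 : ℕ) (x i) * ∏ l : S, P n (p.2 l) (x l.1)) with hG
  have hL : (∑ p : Fin (n+1) × (S → Fin (n+1)), F (E.symm p))
      = ∑ ρ : S → Fin (n+1), ∑ a : Fin (n+1), F (E.symm (a, ρ)) := by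
    rw [Fintype.sum_prod_type]; exact Finset.sum_comm
  have hR : (∑ p : Fin n × (S → Fin (n+1)), G p)
      = ∑ ρ : S → Fin (n+1), ∑ a : Fin n, G (a, ρ) := by
    rw [Fintype.sum_prod_type]; exact Finset.sum_comm
  rw [step1, hL, hR]
  apply Finset.sum_congr rfl
  intro ρ _
  -- fixed ρ : reduce to 1D telescoping
  have lhs_eq : ∑ a : Fin (n+1), F (E.symm (a, ρ))
      = ((n:ℝ) * ∏ l : S, P n (ρ l) (x l.1)) *
        ∑ a ∈ range (n+1), (fun b => c (node n i b ρ)) a * (Sv n a (x i) - P (n-1) a (x i)) := by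
    rw [Finset.mul_sum]
    rw [← Fin.sum_univ_eq_sum_range (fun b => ((n:ℝ) * ∏ l : S, P n (ρ l) (x l.1)) *
      (c (node n i b ρ) * (Sv n b (x i) - P (n-1) b (x i)))) (n+1)]
    apply Finset.sum_congr rfl
    intro a _
    rw [hWp a ρ]
    ring
  rw [lhs_eq, telescope1D hn]
  rw [Finset.mul_sum]
  rw [← Fin.sum_univ_eq_sum_range (fun b => ((n:ℝ) * ∏ l : S, P n (ρ l) (x l.1)) *
    ((c (node n i (b+1) ρ) - c (node n i b ρ)) * P (n-1) b (x i))) n]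
  apply Finset.sum_congr rfl
  intro a _
  rw [hG]
  ring



lemma sum_fun_prod {S : Type*} [Fintype S] [DecidableEq S] {N : ℕ} (h : S → Fin N → ℝ) :
    ∑ ρ : S → Fin N, ∏ l, h l (ρ l) = ∏ l, ∑ a, h l a := (Fintype.prod_sum _).symm

lemma sum_prod_single {S : Type*} [Fintype S] [DecidableEq S] {N : ℕ} (h : S → Fin N → ℝ)
    (l₀ : S) (h1 : ∀ l, l ≠ l₀ → ∑ a, h l a = 1) :
    ∑ ρ : S → Fin N, ∏ l, h l (ρ l) = ∑ a, h l₀ a := by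
  rw [sum_fun_prod]
  exact Finset.prod_eq_single l₀ (fun b _ hb => h1 b hb) (fun h => absurd (Finset.mem_univ l₀) h)

/-- generalization of part (i) sum-to-one. -/
lemma sum_prod_one {S : Type*} [Fintype S] [DecidableEq S] {N : ℕ} (xs : S → ℝ)
    (hx : ∀ l, xs l ∈ Set.Icc (0:ℝ) 1) :
    ∑ ρ : S → Fin (N+1), ∏ l, P N (ρ l) (xs l) = 1 := by
  rw [sum_fun_prod (fun l a => P N a (xs l))]
  exact Finset.prod_eq_one fun l _ => sum_P N (hx l)

/-- generalization of part (i) tail bound. -/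
lemma tail_prod {S : Type*} [Fintype S] [DecidableEq S] {N : ℕ} (hN : 1 ≤ N) (xs : S → ℝ)
    (hx : ∀ l, xs l ∈ Set.Icc (0:ℝ) 1) (l₀ : S) {δ : ℝ} (hδ : 0 < δ) :
    ∑ ρ : S → Fin (N+1), (if δ ≤ |(ρ l₀ : ℝ)/N - xs l₀| then ∏ l, P N (ρ l) (xs l) else 0)
      ≤ 1 / (4 * N * δ ^ 2) := by
  classical
  set h : S → Fin (N+1) → ℝ := fun l a =>
    if l = l₀ then (if δ ≤ |(a : ℝ)/N - xs l| then P N a (xs l) else 0) else P N a (xs l) with hh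
  have hpt : ∀ ρ : S → Fin (N+1),
      (if δ ≤ |(ρ l₀ : ℝ)/N - xs l₀| then ∏ l, P N (ρ l) (xs l) else 0) = ∏ l, h l (ρ l) := by
    intro ρ
    rw [← Finset.mul_prod_erase univ (fun l => h l (ρ l)) (Finset.mem_univ l₀),
        ← Finset.mul_prod_erase univ (fun l => P N (ρ l) (xs l)) (Finset.mem_univ l₀)]
    have h2 : ∏ l ∈ univ.erase l₀, h l (ρ l) = ∏ l ∈ univ.erase l₀, P N (ρ l) (xs l) :=
      Finset.prod_congr rfl fun l hl => by
        rw [hh]; simp only [if_neg (Finset.mem_erase.mp hl).1]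
    rw [h2, hh]
    by_cases hc : δ ≤ |(ρ l₀ : ℝ)/N - xs l₀| <;> simp [hc]
  simp_rw [hpt]
  rw [sum_prod_single h l₀ (fun l hl => by
    simp only [hh, if_neg hl]; exact sum_P N (hx l))]
  simp only [hh, if_pos rfl]
  exact tail_P hN (hx l₀) hδ

section PartII
variable {k m : ℕ} (i : Fin k) {x : Fin k → ℝ}

/-- part (ii) weight. -/
def W2 (m : ℕ) (i : Fin k) (x : Fin k → ℝ)
    (p : Fin (m+1) × ({l : Fin k // l ≠ i} → Fin (m+2))) : ℝ :=
  P m p.1 (x i) * ∏ l : {l : Fin k // l ≠ i}, P (m+1) (p.2 l) (x l.1)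

lemma W2_nonneg (hx : ∀ l, x l ∈ Set.Icc (0:ℝ) 1) (p) : 0 ≤ W2 m i x p :=
  mul_nonneg (P_nonneg (hx i)) (Finset.prod_nonneg fun l _ => P_nonneg (hx l.1))

lemma sum_W2 (hx : ∀ l, x l ∈ Set.Icc (0:ℝ) 1) :
    ∑ p : Fin (m+1) × ({l : Fin k // l ≠ i} → Fin (m+2)), W2 m i x p = 1 := by
  rw [Fintype.sum_prod_type]
  unfold W2
  simp only [← Finset.mul_sum]
  rw [sum_prod_one (fun l : {l : Fin k // l ≠ i} => x l.1) (fun l => hx l.1)]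
  simp only [mul_one]
  exact sum_P m (hx i)

lemma tail_W2_i (hm : 1 ≤ m) (hx : ∀ l, x l ∈ Set.Icc (0:ℝ) 1) {δ : ℝ} (hδ : 0 < δ) :
    ∑ p : Fin (m+1) × ({l : Fin k // l ≠ i} → Fin (m+2)),
      (if δ ≤ |(p.1 : ℝ)/m - x i| then W2 m i x p else 0) ≤ 1 / (4 * m * δ ^ 2) := by
  rw [Fintype.sum_prod_type]
  have key : ∀ a : Fin (m+1),
      (∑ ρ : {l : Fin k // l ≠ i} → Fin (m+2),
        if δ ≤ |(a : ℝ)/m - x i| then W2 m i x (a, ρ) else 0)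
      = (if δ ≤ |(a : ℝ)/m - x i| then P m a (x i) else 0) := by
    intro a
    by_cases hc : δ ≤ |(a : ℝ)/m - x i|
    · simp only [hc, if_true, W2, ← Finset.mul_sum,
        sum_prod_one (fun l : {l : Fin k // l ≠ i} => x l.1) (fun l => hx l.1), mul_one]
    · simp [hc]
  simp_rw [key]
  exact tail_P hm (hx i) hδ

lemma tail_W2_l (hx : ∀ l, x l ∈ Set.Icc (0:ℝ) 1) (l₀ : {l : Fin k // l ≠ i}) {δ : ℝ}
    (hδ : 0 < δ) :
    ∑ p : Fin (m+1) × ({l : Fin k // l ≠ i} → Fin (m+2)),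
      (if δ ≤ |(p.2 l₀ : ℝ)/(m+1) - x l₀.1| then W2 m i x p else 0)
      ≤ 1 / (4 * (m+1) * δ ^ 2) := by
  rw [Fintype.sum_prod_type]
  have key : ∀ a : Fin (m+1),
      (∑ ρ : {l : Fin k // l ≠ i} → Fin (m+2),
        if δ ≤ |(ρ l₀ : ℝ)/(m+1) - x l₀.1| then W2 m i x (a, ρ) else 0)
      = P m a (x i) * ∑ ρ : {l : Fin k // l ≠ i} → Fin (m+2),
          (if δ ≤ |(ρ l₀ : ℝ)/(m+1) - x l₀.1| then
            ∏ l : {l : Fin k // l ≠ i}, P (m+1) (ρ l) (x l.1) else 0) := by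
    intro a
    rw [Finset.mul_sum]
    apply Finset.sum_congr rfl
    intro ρ _
    rw [W2]
    by_cases hc : δ ≤ |(ρ l₀ : ℝ)/(m+1) - x l₀.1| <;> simp [hc]
  simp_rw [key]
  have htp := tail_prod (by omega : 1 ≤ m + 1) (fun l : {l : Fin k // l ≠ i} => x l.1)
    (fun l => hx l.1) l₀ hδ
  push_cast at htp ⊢
  calc ∑ a : Fin (m+1), P m a (x i) * ∑ ρ : {l : Fin k // l ≠ i} → Fin (m+2),
          (if δ ≤ |(ρ l₀ : ℝ)/(m+1) - x l₀.1| then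
            ∏ l : {l : Fin k // l ≠ i}, P (m+1) (ρ l) (x l.1) else 0)
      ≤ ∑ a : Fin (m+1), P m a (x i) * (1 / (4 * (m+1) * δ ^ 2)) := by
        apply Finset.sum_le_sum
        intro a _
        apply mul_le_mul_of_nonneg_left _ (P_nonneg (hx i))
        convert htp using 2 <;> push_cast <;> ring
    _ = 1 / (4 * (m+1) * δ ^ 2) := by
        rw [← Finset.sum_mul, sum_P m (hx i), one_mul]

end PartII

section FTC
variable {k : ℕ} {f : (Fin k → ℝ) → ℝ}

lemma step_int (hf : ContDiff ℝ 1 f) (z v : Fin k → ℝ) :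
    f (z + v) - f z = ∫ t in (0:ℝ)..1, fderiv ℝ f (z + t • v) v := by
  have hd : ∀ t : ℝ, HasDerivAt (fun t : ℝ => f (z + t • v)) (fderiv ℝ f (z + t • v) v) t := by
    intro t
    have h1 : HasDerivAt (fun t : ℝ => z + t • v) v t := by
      simpa using ((hasDerivAt_id t).smul_const v).const_add z
    exact ((hf.differentiable one_ne_zero (z + t • v)).hasFDerivAt).comp_hasDerivAt t h1
  have hcont : Continuous fun t : ℝ => fderiv ℝ f (z + t • v) v := by
    apply Continuous.clm_apply _ continuous_const
    exact (hf.continuous_fderiv one_ne_zero).comp (by continuity)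
  rw [intervalIntegral.integral_eq_sub_of_hasDerivAt (fun t _ => hd t)
    (hcont.intervalIntegrable 0 1)]
  simp

lemma c2_int (hf : ContDiff ℝ 1 f) {n : ℕ} (hn : 0 < n) (i : Fin k) (b : ℕ)
    (ρ : {l : Fin k // l ≠ i} → Fin (n+1)) :
    (n:ℝ) * (f (node n i (b+1) ρ) - f (node n i b ρ))
      = ∫ t in (0:ℝ)..1,
          fderiv ℝ f (node n i b ρ + t • (Pi.single i ((n:ℝ)⁻¹) : Fin k → ℝ)) (Pi.single i 1) := by
  have hne : (n:ℝ) ≠ 0 := Nat.cast_ne_zero.mpr hn.ne'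
  have hv : node n i (b+1) ρ = node n i b ρ + (Pi.single i ((n:ℝ)⁻¹) : Fin k → ℝ) := by
    funext l
    unfold node
    by_cases h : l = i
    · subst h
      rw [dif_pos rfl, Pi.add_apply, dif_pos rfl, Pi.single_eq_same]
      push_cast
      field_simp
    · rw [dif_neg h, Pi.add_apply, dif_neg h, Pi.single_eq_of_ne h, add_zero]
  rw [hv, step_int hf]
  have hsingle : (Pi.single i ((n:ℝ)⁻¹) : Fin k → ℝ) = (n:ℝ)⁻¹ • (Pi.single i (1:ℝ) : Fin k → ℝ) := by
    funext l
    by_cases h : l = i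
    · subst h; simp
    · simp [Pi.single_eq_of_ne h]
  have : ∀ y : Fin k → ℝ, fderiv ℝ f y ((Pi.single i ((n:ℝ)⁻¹) : Fin k → ℝ))
      = (n:ℝ)⁻¹ * fderiv ℝ f y (Pi.single i 1) := by
    intro y
    rw [hsingle, map_smul, smul_eq_mul]
  simp_rw [this]
  rw [intervalIntegral.integral_const_mul, ← mul_assoc, mul_inv_cancel₀ hne, one_mul]

end FTC
-- ==================== final assembly ====================

section Final
variable {k : ℕ} {f : (Fin k → ℝ) → ℝ}

lemma cube_mem_iff (x : Fin k → ℝ) :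
    x ∈ (Set.univ.pi fun _ : Fin k => Set.Icc (0:ℝ) 1) ↔ ∀ l, x l ∈ Set.Icc (0:ℝ) 1 :=
  Set.mem_univ_pi

lemma cube_compact : IsCompact (Set.univ.pi fun _ : Fin k => Set.Icc (0:ℝ) 1) :=
  isCompact_univ_pi fun _ => isCompact_Icc

/-- Part (i). -/
theorem part1 (hf : ContDiff ℝ 1 f) :
    TendstoUniformlyOn (fun n => bernsteinPoly k f n) f Filter.atTop
      (Set.univ.pi fun _ => Set.Icc 0 1) := by
  set cube := Set.univ.pi fun _ : Fin k => Set.Icc (0:ℝ) 1 with hcube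
  rw [Metric.tendstoUniformlyOn_iff]
  intro ε hε
  obtain ⟨M, hM⟩ := cube_compact.exists_bound_of_continuousOn (hf.continuous.continuousOn
    (s := cube))
  have hUC := cube_compact.uniformContinuousOn_of_continuous (hf.continuous.continuousOn
    (s := cube))
  rw [Metric.uniformContinuousOn_iff] at hUC
  obtain ⟨δ₀, hδ₀, hUC⟩ := hUC (ε/4) (by linarith)
  set δ := δ₀/2 with hδdef
  have hδ : 0 < δ := by positivity
  have htt : Tendsto (fun n : ℕ => 2*M*((k:ℝ)*(1/(4*(n:ℝ)*δ^2)))) atTop (nhds 0) := by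
    have h1 : (fun n : ℕ => 2*M*((k:ℝ)*(1/(4*(n:ℝ)*δ^2))))
        = fun n : ℕ => (2*M*(k:ℝ)/(4*δ^2)) * (1/(n:ℝ)) := by
      funext n
      simp only [one_div, mul_inv]
      ring
    rw [h1]
    simpa using (tendsto_one_div_atTop_nhds_zero_nat (𝕜 := ℝ)).const_mul (2*M*(k:ℝ)/(4*δ^2))
  have hev : ∀ᶠ n : ℕ in atTop, 2*M*((k:ℝ)*(1/(4*(n:ℝ)*δ^2))) < ε/2 :=
    htt.eventually_lt_const (by linarith)
  filter_upwards [hev, eventually_ge_atTop 1] with n hn hn1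
  intro x hx
  have hx' : ∀ l, x l ∈ Set.Icc (0:ℝ) 1 := (cube_mem_iff x).mp hx
  have hnR : (0:ℝ) < n := by exact_mod_cast hn1
  -- nodes are in the cube
  have hnode : ∀ j : Fin k → Fin (n+1), (fun l => ((j l : ℕ) : ℝ)/n) ∈ cube := by
    intro j
    rw [cube_mem_iff]
    intro l
    constructor
    · positivity
    · rw [div_le_one hnR]
      exact_mod_cast Nat.lt_succ_iff.mp (j l).isLt
  have hkey := core (fun j : Fin k → Fin (n+1) => ∏ l, P n (j l) (x l))
    (fun j l => ((j l : ℕ) : ℝ)/n)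
    (fun j => f (fun l => ((j l : ℕ) : ℝ)/n)) (f x) x M (ε/4) δ (1/(4*(n:ℝ)*δ^2))
    (by linarith)
    (fun j => Finset.prod_nonneg fun l _ => P_nonneg (hx' l))
    (sum_prod_one x hx')
    (fun j => by
      have := hM _ (hnode j)
      rwa [Real.norm_eq_abs] at this)
    (by have := hM x hx; rwa [Real.norm_eq_abs] at this)
    (fun j hj => by
      have hdist : dist (fun l => ((j l : ℕ) : ℝ)/n) x ≤ δ := by
        rw [dist_pi_le_iff hδ.le]
        intro l
        rw [Real.dist_eq]
        exact hj l
      have := hUC _ (hnode j) x hx (lt_of_le_of_lt hdist (by rw [hδdef]; linarith))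
      rw [Real.dist_eq] at this
      exact this.le)
    (fun l => tail_prod hn1 x hx' l hδ)
  have hBval : bernsteinPoly k f n x
      = ∑ j : Fin k → Fin (n+1), f (fun l => ((j l : ℕ) : ℝ)/n) * ∏ l, P n (j l) (x l) := rfl
  rw [Real.dist_eq, abs_sub_comm, hBval]
  calc |(∑ j : Fin k → Fin (n+1), f (fun l => ((j l : ℕ) : ℝ)/n) * ∏ l, P n (j l) (x l)) - f x|
      ≤ ε/4 + 2*M*((k:ℝ)*(1/(4*(n:ℝ)*δ^2))) := hkey
    _ < ε/4 + ε/2 := by linarith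
    _ < ε := by linarith


/-- Part (ii). -/
theorem part2 (hf : ContDiff ℝ 1 f) (i : Fin k) :
    TendstoUniformlyOn
      (fun n x => fderiv ℝ (bernsteinPoly k f n) x (Pi.single i 1))
      (fun x => fderiv ℝ f x (Pi.single i 1)) Filter.atTop
      (Set.univ.pi fun _ => Set.Icc 0 1) := by
  set cube := Set.univ.pi fun _ : Fin k => Set.Icc (0:ℝ) 1 with hcube
  set g : (Fin k → ℝ) → ℝ := fun y => fderiv ℝ f y (Pi.single i 1) with hg
  have hgcont : Continuous g := (hf.continuous_fderiv one_ne_zero).clm_apply continuous_const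
  rw [Metric.tendstoUniformlyOn_iff]
  intro ε hε
  obtain ⟨M, hM⟩ := cube_compact.exists_bound_of_continuousOn (hgcont.continuousOn (s := cube))
  have hUC := cube_compact.uniformContinuousOn_of_continuous (hgcont.continuousOn (s := cube))
  rw [Metric.uniformContinuousOn_iff] at hUC
  obtain ⟨δ₀, hδ₀, hUC⟩ := hUC (ε/4) (by linarith)
  set δ := δ₀/4 with hδdef
  have hδ : 0 < δ := by positivity
  have htt : Tendsto (fun n : ℕ => 2*M*((k:ℝ)*(1/(4*((n - 1 : ℕ):ℝ)*δ^2)))) atTop (nhds 0) := by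
    have h2 : Tendsto (fun n : ℕ => (2*M*(k:ℝ)/(4*δ^2)) * (1/((n - 1:ℕ):ℝ))) atTop (nhds 0) := by
      have hcomp := (tendsto_one_div_atTop_nhds_zero_nat (𝕜 := ℝ)).comp (Filter.tendsto_sub_atTop_nat 1)
      simpa using hcomp.const_mul (2*M*(k:ℝ)/(4*δ^2))
    have h1 : (fun n : ℕ => 2*M*((k:ℝ)*(1/(4*((n - 1:ℕ):ℝ)*δ^2))))
        = fun n : ℕ => (2*M*(k:ℝ)/(4*δ^2)) * (1/((n - 1:ℕ):ℝ)) := by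
      funext n
      simp only [one_div, mul_inv]
      ring
    rw [h1]; exact h2
  have hev1 : ∀ᶠ n : ℕ in atTop, 2*M*((k:ℝ)*(1/(4*((n - 1:ℕ):ℝ)*δ^2))) < ε/2 :=
    htt.eventually_lt_const (by linarith)
  have h2n : Tendsto (fun n : ℕ => 2/(n:ℝ)) atTop (nhds 0) := by
    have := (tendsto_one_div_atTop_nhds_zero_nat (𝕜 := ℝ)).const_mul (2:ℝ)
    simpa [one_div, mul_comm, div_eq_mul_inv] using this
  have hev2 : ∀ᶠ n : ℕ in atTop, 2/(n:ℝ) < δ := h2n.eventually_lt_const hδ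
  filter_upwards [hev1, hev2, eventually_ge_atTop 2] with n hn1 hn2 hn3
  intro x hx
  obtain ⟨m, rfl⟩ : ∃ m, n = m + 1 := ⟨n - 1, by omega⟩
  have hm : 1 ≤ m := by omega
  have hmR : (0:ℝ) < m := by exact_mod_cast hm
  have hm1R : (0:ℝ) < (m:ℝ) + 1 := by positivity
  have hx' : ∀ l, x l ∈ Set.Icc (0:ℝ) 1 := (cube_mem_iff x).mp hx
  simp only [Nat.add_sub_cancel] at hn1
  -- the coefficients
  set S := {l : Fin k // l ≠ i}
  set c : Fin (m+1) × (S → Fin (m+2)) → ℝ := fun p =>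
    (((m+1:ℕ)):ℝ) * (f (node (m+1) i ((p.1:ℕ)+1) p.2) - f (node (m+1) i (p.1:ℕ) p.2)) with hc
  set ξ : Fin (m+1) × (S → Fin (m+2)) → Fin k → ℝ := fun p l =>
    if h : l = i then (p.1:ℝ)/(m:ℝ) else ((p.2 ⟨l,h⟩ : ℕ):ℝ)/((m:ℝ)+1) with hξ
  -- identity: the derivative of the Bernstein polynomial
  have hid : fderiv ℝ (bernsteinPoly k f (m+1)) x (Pi.single i 1)
      = ∑ p : Fin (m+1) × (S → Fin (m+2)), c p * W2 m i x p := by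
    rw [fderiv_bern k f (by omega) x i, reindex (by omega) i f x]
    rfl
  -- the integral representation of the coefficients
  have hγcont : ∀ p : Fin (m+1) × (S → Fin (m+2)), Continuous (fun t : ℝ =>
      node (m+1) i (p.1:ℕ) p.2 + t • (Pi.single i (((m+1:ℕ):ℝ))⁻¹ : Fin k → ℝ)) := by
    intro p
    exact continuous_const.add (continuous_id.smul continuous_const)
  have hγmem : ∀ (p : Fin (m+1) × (S → Fin (m+2))) (t : ℝ), t ∈ Set.Icc (0:ℝ) 1 →
      (node (m+1) i (p.1:ℕ) p.2 + t • (Pi.single i (((m+1:ℕ):ℝ))⁻¹ : Fin k → ℝ)) ∈ cube := by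
    intro p t ht
    rw [cube_mem_iff]
    intro l
    rw [Pi.add_apply, Pi.smul_apply, smul_eq_mul]
    by_cases h : l = i
    · subst h
      rw [node, dif_pos rfl, Pi.single_eq_same]
      have hp1 : ((p.1 : ℕ):ℝ) ≤ m := by exact_mod_cast Nat.lt_succ_iff.mp p.1.isLt
      have hp0 : (0:ℝ) ≤ ((p.1 : ℕ):ℝ) := by positivity
      push_cast
      have hrw : ((p.1:ℕ):ℝ)/((m:ℝ)+1) + t * ((m:ℝ)+1)⁻¹ = (((p.1:ℕ):ℝ) + t) * ((m:ℝ)+1)⁻¹ := by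
        rw [div_eq_mul_inv]; ring
      rw [hrw]
      constructor
      · apply mul_nonneg (by linarith [ht.1]) (by positivity)
      · have h4 : ((p.1:ℕ):ℝ) + t ≤ (m:ℝ)+1 := by linarith [ht.2]
        calc (((p.1:ℕ):ℝ) + t) * ((m:ℝ)+1)⁻¹ ≤ ((m:ℝ)+1) * ((m:ℝ)+1)⁻¹ :=
              mul_le_mul_of_nonneg_right h4 (by positivity)
          _ = 1 := mul_inv_cancel₀ hm1R.ne'
    · rw [node, dif_neg h, Pi.single_eq_of_ne h, mul_zero, add_zero]
      have hp1 : ((p.2 ⟨l, h⟩ : ℕ):ℝ) ≤ (m:ℝ)+1 := by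
        exact_mod_cast Nat.lt_succ_iff.mp (p.2 ⟨l, h⟩).isLt
      push_cast
      constructor
      · positivity
      · rw [div_le_one hm1R]; exact hp1
  have hcint : ∀ p : Fin (m+1) × (S → Fin (m+2)), c p = ∫ t in (0:ℝ)..1,
      g (node (m+1) i (p.1:ℕ) p.2 + t • (Pi.single i (((m+1:ℕ):ℝ))⁻¹ : Fin k → ℝ)) := by
    intro p
    rw [hc]
    exact c2_int hf (by omega) i (p.1:ℕ) p.2
  have hMc : ∀ p, |c p| ≤ M := by
    intro p
    rw [hcint p, ← Real.norm_eq_abs]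
    have := intervalIntegral.norm_integral_le_of_norm_le_const (C := M)
      (f := fun t => g (node (m+1) i (p.1:ℕ) p.2 +
        t • (Pi.single i (((m+1:ℕ):ℝ))⁻¹ : Fin k → ℝ)))
      (a := 0) (b := 1) ?_
    · simpa using this
    · intro t ht
      rw [Set.uIoc_of_le (by norm_num : (0:ℝ) ≤ 1)] at ht
      exact hM _ (hγmem p t ⟨ht.1.le, ht.2⟩)
  -- closeness
  have hclose : ∀ p : Fin (m+1) × (S → Fin (m+2)),
      (∀ l, |ξ p l - x l| ≤ δ) → |c p - g x| ≤ ε/4 := by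
    intro p hp
    have hptx : ∀ t : ℝ, t ∈ Set.Icc (0:ℝ) 1 →
        dist (node (m+1) i (p.1:ℕ) p.2 + t • (Pi.single i (((m+1:ℕ):ℝ))⁻¹ : Fin k → ℝ)) x
          < δ₀ := by
      intro t ht
      have hd2 : dist (node (m+1) i (p.1:ℕ) p.2 +
          t • (Pi.single i (((m+1:ℕ):ℝ))⁻¹ : Fin k → ℝ)) x ≤ δ₀/2 := by
        rw [dist_pi_le_iff (by linarith)]
        intro l
        rw [Real.dist_eq, Pi.add_apply, Pi.smul_apply, smul_eq_mul]
        by_cases h : l = i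
        · rw [h]
          rw [node, dif_pos rfl, Pi.single_eq_same]
          have hpi : |((p.1:ℕ):ℝ)/(m:ℝ) - x i| ≤ δ := by
            have hh := hp i
            rw [hξ] at hh
            simpa using hh
          have hu := abs_le.mp hpi
          have hp1 : ((p.1 : ℕ):ℝ) ≤ m := by exact_mod_cast Nat.lt_succ_iff.mp p.1.isLt
          have hp0 : (0:ℝ) ≤ ((p.1 : ℕ):ℝ) := by positivity
          have hdval : ((p.1:ℕ):ℝ)/(m:ℝ) - ((p.1:ℕ):ℝ)/((m:ℝ)+1)
              = ((p.1:ℕ):ℝ)/((m:ℝ)*((m:ℝ)+1)) := by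
            field_simp
            ring
          have hd0 : (0:ℝ) ≤ ((p.1:ℕ):ℝ)/(m:ℝ) - ((p.1:ℕ):ℝ)/((m:ℝ)+1) := by
            rw [hdval]; positivity
          have hd1 : ((p.1:ℕ):ℝ)/(m:ℝ) - ((p.1:ℕ):ℝ)/((m:ℝ)+1) ≤ 1/((m:ℝ)+1) := by
            rw [hdval]
            calc ((p.1:ℕ):ℝ)/((m:ℝ)*((m:ℝ)+1)) ≤ (m:ℝ)/((m:ℝ)*((m:ℝ)+1)) := by gcongr
              _ = 1/((m:ℝ)+1) := by field_simp
          have hs0 : (0:ℝ) ≤ t * ((m:ℝ)+1)⁻¹ := mul_nonneg ht.1 (by positivity)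
          have hs1 : t * ((m:ℝ)+1)⁻¹ ≤ 1/((m:ℝ)+1) := by
            rw [one_div]
            exact mul_le_of_le_one_left (by positivity) ht.2
          have h2m : 2/((m:ℝ)+1) < δ := by
            have hcast : ((m:ℕ):ℝ)+1 = ((m+1:ℕ):ℝ) := by push_cast; ring
            rw [hcast]; exact hn2
          have h12 : 1/((m:ℝ)+1) + 1/((m:ℝ)+1) = 2/((m:ℝ)+1) := by ring
          have hδ4 : δ = δ₀/4 := hδdef
          push_cast
          rw [abs_le]
          constructor
          · linarith [hu.1, hu.2]
          · linarith [hu.1, hu.2]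
        · rw [node, dif_neg h, Pi.single_eq_of_ne h, mul_zero, add_zero]
          have hpl := hp l
          rw [hξ] at hpl
          simp only [dif_neg h] at hpl
          have hδ4 : δ = δ₀/4 := hδdef
          push_cast at hpl ⊢
          calc |((p.2 ⟨l, h⟩ : ℕ):ℝ)/((m:ℝ)+1) - x l| ≤ δ := hpl
            _ ≤ δ₀/2 := by linarith
      calc dist _ x ≤ δ₀/2 := hd2
        _ < δ₀ := by linarith
    have hInt : IntervalIntegrable (fun t : ℝ => g (node (m+1) i (p.1:ℕ) p.2 +
        t • (Pi.single i (((m+1:ℕ):ℝ))⁻¹ : Fin k → ℝ))) MeasureTheory.volume 0 1 :=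
      ((hgcont.comp (hγcont p)).intervalIntegrable 0 1)
    have hsub : c p - g x = ∫ t in (0:ℝ)..1,
        (g (node (m+1) i (p.1:ℕ) p.2 + t • (Pi.single i (((m+1:ℕ):ℝ))⁻¹ : Fin k → ℝ)) - g x) := by
      rw [intervalIntegral.integral_sub hInt (intervalIntegrable_const), hcint p]
      simp
    rw [hsub, ← Real.norm_eq_abs]
    have := intervalIntegral.norm_integral_le_of_norm_le_const (C := ε/4)
      (f := fun t => g (node (m+1) i (p.1:ℕ) p.2 +
        t • (Pi.single i (((m+1:ℕ):ℝ))⁻¹ : Fin k → ℝ)) - g x)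
      (a := 0) (b := 1) ?_
    · simpa using this
    · intro t ht
      rw [Set.uIoc_of_le (by norm_num : (0:ℝ) ≤ 1)] at ht
      have := hUC _ (hγmem p t ⟨ht.1.le, ht.2⟩) x hx (hptx t ⟨ht.1.le, ht.2⟩)
      rw [Real.dist_eq] at this
      rw [Real.norm_eq_abs]
      exact this.le
  -- tails
  have htail : ∀ l : Fin k,
      ∑ p : Fin (m+1) × (S → Fin (m+2)), (if δ ≤ |ξ p l - x l| then W2 m i x p else 0)
        ≤ 1/(4*(m:ℝ)*δ^2) := by
    intro l
    by_cases h : l = i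
    · have heq : ∀ p : Fin (m+1) × (S → Fin (m+2)), ξ p l = (p.1:ℝ)/(m:ℝ) := by
        intro p; rw [hξ]; simp [h]
      simp_rw [heq, h]
      have := tail_W2_i i hm hx' hδ
      convert this using 3 <;> push_cast <;> ring_nf
    · have heq : ∀ p : Fin (m+1) × (S → Fin (m+2)),
          ξ p l = ((p.2 ⟨l,h⟩ : ℕ):ℝ)/((m:ℝ)+1) := by
        intro p; rw [hξ]; simp only [dif_neg h]
      simp_rw [heq]
      have hW2l := tail_W2_l (m := m) i hx' ⟨l, h⟩ hδ
      calc ∑ p : Fin (m+1) × (S → Fin (m+2)),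
            (if δ ≤ |((p.2 ⟨l,h⟩ : ℕ):ℝ)/((m:ℝ)+1) - x l| then W2 m i x p else 0)
          ≤ 1/(4*((m:ℝ)+1)*δ^2) := by
            convert hW2l using 3 <;> push_cast <;> ring_nf
        _ ≤ 1/(4*(m:ℝ)*δ^2) := by
            apply one_div_le_one_div_of_le (by positivity)
            nlinarith [sq_nonneg δ]
  -- core estimate
  have hkey := core (W2 m i x) ξ c (g x) x M (ε/4) δ (1/(4*(m:ℝ)*δ^2))
    (by linarith)
    (W2_nonneg i hx')
    (sum_W2 i hx')
    hMc
    (by have := hM x hx; rwa [Real.norm_eq_abs] at this)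
    hclose
    htail
  rw [Real.dist_eq, abs_sub_comm, hid]
  calc |(∑ p : Fin (m+1) × (S → Fin (m+2)), c p * W2 m i x p) - g x|
      ≤ ε/4 + 2*M*((k:ℝ)*(1/(4*(m:ℝ)*δ^2))) := hkey
    _ < ε/4 + ε/2 := by linarith
    _ < ε := by linarith

end Final
end Stmt13

/-- For `f ∈ C¹(ℝ^k)`, the Bernstein polynomials `Bₙ(f;·)` converge
uniformly to `f` on `[0,1]^k`, and each partial derivative `∂ᵢBₙ(f;·)` converges
uniformly to `∂ᵢf` on `[0,1]^k`. -/
theorem stmt_13 (k : ℕ) (f : (Fin k → ℝ) → ℝ) (hf : ContDiff ℝ 1 f) :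
    TendstoUniformlyOn (fun n => bernsteinPoly k f n) f Filter.atTop
      (Set.univ.pi fun _ => Set.Icc 0 1) ∧
    ∀ i : Fin k, TendstoUniformlyOn
      (fun n x => fderiv ℝ (bernsteinPoly k f n) x (Pi.single i 1))
      (fun x => fderiv ℝ f x (Pi.single i 1)) Filter.atTop
      (Set.univ.pi fun _ => Set.Icc 0 1) :=
  ⟨Stmt13.part1 hf, fun i => Stmt13.part2 hf i⟩

end
end

section
/- Let g, h ∈ L₂^↑. Then pr_g h ∈ L₂^↑; that is, the conditional expectation E(h | σ*(g)) on ([0,1], leb) of a non-decreasing function h, given the completed σ-algebra generated by a non-decreasing function g, has a non-decreasing version. -/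
open MeasureTheory Set Filter

noncomputable section

namespace Stmt15Aux

instance : IsFiniteMeasure leb := by
  constructor
  rw [leb, Measure.restrict_apply_univ, Real.volume_Icc]
  norm_num

/-- Average of `h` over the level set of `g` at `t`. -/
def avg (g h : ℝ → ℝ) (t : ℝ) : ℝ :=
  (∫ x in g ⁻¹' {t}, h x ∂leb) / (leb (g ⁻¹' {t})).toReal

/-- Generalized inverse of `g`, truncated to `[0,1]`. -/
def rho (g : ℝ → ℝ) (t : ℝ) : ℝ :=
  sInf ({1} ∪ {x ∈ Set.Icc (0:ℝ) 1 | t ≤ g x})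

/-- The candidate "function of `t`" version of the conditional expectation. -/
def phi (g h : ℝ → ℝ) (t : ℝ) : ℝ :=
  if 0 < leb (g ⁻¹' {t}) then avg g h t else h (rho g t)

lemma rho_set_subset (g : ℝ → ℝ) (t : ℝ) :
    ({1} ∪ {x ∈ Set.Icc (0:ℝ) 1 | t ≤ g x}) ⊆ Set.Icc (0:ℝ) 1 := by
  rintro x (hx | hx)
  · rw [mem_singleton_iff] at hx; subst hx; exact ⟨zero_le_one, le_rfl⟩
  · exact hx.1

lemma rho_set_nonempty (g : ℝ → ℝ) (t : ℝ) :
    ({1} ∪ {x ∈ Set.Icc (0:ℝ) 1 | t ≤ g x}).Nonempty :=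
  ⟨1, Or.inl rfl⟩

lemma rho_set_bddBelow (g : ℝ → ℝ) (t : ℝ) :
    BddBelow ({1} ∪ {x ∈ Set.Icc (0:ℝ) 1 | t ≤ g x}) :=
  ⟨0, fun x hx => (rho_set_subset g t hx).1⟩

lemma rho_mem (g : ℝ → ℝ) (t : ℝ) : rho g t ∈ Set.Icc (0:ℝ) 1 := by
  constructor
  · exact le_csInf (rho_set_nonempty g t) fun x hx => (rho_set_subset g t hx).1
  · exact csInf_le (rho_set_bddBelow g t) (Or.inl rfl)

lemma rho_mono (g : ℝ → ℝ) : Monotone (rho g) := by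
  intro s t hst
  apply csInf_le_csInf (rho_set_bddBelow g s) (rho_set_nonempty g t)
  rintro x (hx | hx)
  · exact Or.inl hx
  · exact Or.inr ⟨hx.1, hst.trans hx.2⟩

/-- A null level set of a monotone function meets `[0,1]` in at most one point. -/
lemma null_level_singleton {g : ℝ → ℝ} (hg : MonotoneOn g (Set.Icc 0 1))
    {x : ℝ} (hx : x ∈ Set.Icc (0:ℝ) 1) (h0 : leb (g ⁻¹' {g x}) = 0)
    {z : ℝ} (hz : z ∈ Set.Icc (0:ℝ) 1) (hgz : g z = g x) : z = x := by
  by_contra hne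
  have key : ∀ a b : ℝ, a ∈ Set.Icc (0:ℝ) 1 → b ∈ Set.Icc (0:ℝ) 1 → a < b →
      g a = g x → g b = g x → False := by
    intro a b ha hb hab hga hgb
    have hsub : Set.Ioo a b ⊆ g ⁻¹' {g x} := by
      intro w hw
      have hw' : w ∈ Set.Icc (0:ℝ) 1 := ⟨ha.1.trans hw.1.le, hw.2.le.trans hb.2⟩
      have h1 : g a ≤ g w := hg ha hw' hw.1.le
      have h2 : g w ≤ g b := hg hw' hb hw.2.le
      have : g w = g x := le_antisymm (hgb ▸ h2) (hga ▸ h1)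
      simpa using this
    have hIoo : Set.Ioo a b ⊆ Set.Icc (0:ℝ) 1 := fun w hw =>
      ⟨ha.1.trans hw.1.le, hw.2.le.trans hb.2⟩
    have hle : leb (Set.Ioo a b) ≤ leb (g ⁻¹' {g x}) := measure_mono hsub
    rw [h0, le_zero_iff] at hle
    have : leb (Set.Ioo a b) = volume (Set.Ioo a b) := by
      rw [leb, Measure.restrict_apply measurableSet_Ioo,
        Set.inter_eq_self_of_subset_left hIoo]
    rw [this, Real.volume_Ioo] at hle
    rw [ENNReal.ofReal_eq_zero] at hle
    linarith
  rcases lt_or_gt_of_ne hne with hlt | hlt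
  · exact key z x hz hx hlt hgz rfl
  · exact key x z hx hz hlt rfl hgz

lemma rho_fix {g : ℝ → ℝ} (hg : MonotoneOn g (Set.Icc 0 1))
    {x : ℝ} (hx : x ∈ Set.Icc (0:ℝ) 1) (h0 : leb (g ⁻¹' {g x}) = 0) :
    rho g (g x) = x := by
  apply le_antisymm
  · exact csInf_le (rho_set_bddBelow g (g x)) (Or.inr ⟨hx, le_rfl⟩)
  · apply le_csInf (rho_set_nonempty g (g x))
    rintro y (hy | hy)
    · rw [mem_singleton_iff] at hy; subst hy; exact hx.2
    · by_contra hxy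
      push_neg at hxy
      have h1 : g y ≤ g x := hg hy.1 hx hxy.le
      have h2 : g y = g x := le_antisymm h1 hy.2
      have := null_level_singleton hg hx h0 hy.1 h2
      exact absurd this (by linarith [hxy])

lemma le_of_level_lt {g : ℝ → ℝ} (hg : MonotoneOn g (Set.Icc 0 1))
    {z w : ℝ} (hz : z ∈ Set.Icc (0:ℝ) 1) (hw : w ∈ Set.Icc (0:ℝ) 1)
    (hlt : g z < g w) : z ≤ w := by
  by_contra hzw
  push_neg at hzw
  exact absurd (hg hw hz hzw.le) (not_le.mpr hlt)

lemma avg_le_pivot {g h : ℝ → ℝ} (hgm : Measurable g)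
    (hh : MonotoneOn h (Set.Icc 0 1)) (hint : Integrable h leb) {t p : ℝ}
    (ht : 0 < leb (g ⁻¹' {t})) (hp : p ∈ Set.Icc (0:ℝ) 1)
    (hub : ∀ z ∈ g ⁻¹' {t} ∩ Set.Icc (0:ℝ) 1, z ≤ p) :
    avg g h t ≤ h p := by
  have mA : MeasurableSet (g ⁻¹' {t}) := hgm (measurableSet_singleton t)
  have hae : ∀ᵐ z ∂(leb.restrict (g ⁻¹' {t})), h z ≤ h p := by
    have h1 : ∀ᵐ z ∂(leb.restrict (g ⁻¹' {t})), z ∈ g ⁻¹' {t} := ae_restrict_mem mA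
    have h2 : ∀ᵐ z ∂leb, z ∈ Set.Icc (0:ℝ) 1 := by
      rw [leb]; exact ae_restrict_mem measurableSet_Icc
    have h2' : ∀ᵐ z ∂(leb.restrict (g ⁻¹' {t})), z ∈ Set.Icc (0:ℝ) 1 :=
      ae_restrict_of_ae h2
    filter_upwards [h1, h2'] with z hz1 hz2
    exact hh hz2 hp (hub z ⟨hz1, hz2⟩)
  have hI : (∫ x in g ⁻¹' {t}, h x ∂leb) ≤ ∫ _ in g ⁻¹' {t}, h p ∂leb :=
    integral_mono_ae hint.integrableOn (integrable_const _) hae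
  rw [setIntegral_const, smul_eq_mul] at hI
  have hM : 0 < (leb (g ⁻¹' {t})).toReal :=
    ENNReal.toReal_pos ht.ne' (measure_ne_top leb _)
  rw [avg, div_le_iff₀ hM]
  rw [measureReal_def] at hI
  linarith [hI]

lemma pivot_le_avg {g h : ℝ → ℝ} (hgm : Measurable g)
    (hh : MonotoneOn h (Set.Icc 0 1)) (hint : Integrable h leb) {t p : ℝ}
    (ht : 0 < leb (g ⁻¹' {t})) (hp : p ∈ Set.Icc (0:ℝ) 1)
    (hlb : ∀ z ∈ g ⁻¹' {t} ∩ Set.Icc (0:ℝ) 1, p ≤ z) :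
    h p ≤ avg g h t := by
  have mA : MeasurableSet (g ⁻¹' {t}) := hgm (measurableSet_singleton t)
  have hae : ∀ᵐ z ∂(leb.restrict (g ⁻¹' {t})), h p ≤ h z := by
    have h1 : ∀ᵐ z ∂(leb.restrict (g ⁻¹' {t})), z ∈ g ⁻¹' {t} := ae_restrict_mem mA
    have h2 : ∀ᵐ z ∂leb, z ∈ Set.Icc (0:ℝ) 1 := by
      rw [leb]; exact ae_restrict_mem measurableSet_Icc
    have h2' : ∀ᵐ z ∂(leb.restrict (g ⁻¹' {t})), z ∈ Set.Icc (0:ℝ) 1 :=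
      ae_restrict_of_ae h2
    filter_upwards [h1, h2'] with z hz1 hz2
    exact hh hp hz2 (hlb z ⟨hz1, hz2⟩)
  have hI : (∫ _ in g ⁻¹' {t}, h p ∂leb) ≤ ∫ x in g ⁻¹' {t}, h x ∂leb :=
    integral_mono_ae (integrable_const _) hint.integrableOn hae
  rw [setIntegral_const, smul_eq_mul] at hI
  have hM : 0 < (leb (g ⁻¹' {t})).toReal :=
    ENNReal.toReal_pos ht.ne' (measure_ne_top leb _)
  rw [avg, le_div_iff₀ hM]
  rw [measureReal_def] at hI
  linarith [hI]

lemma phi_mono_pair {g h : ℝ → ℝ} (hg : MonotoneOn g (Set.Icc 0 1))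
    (hgm : Measurable g) (hh : MonotoneOn h (Set.Icc 0 1))
    (hint : Integrable h leb) {x y : ℝ} (hx : x ∈ Set.Icc (0:ℝ) 1)
    (hy : y ∈ Set.Icc (0:ℝ) 1) (hxy : x ≤ y) :
    phi g h (g x) ≤ phi g h (g y) := by
  rcases eq_or_lt_of_le (hg hx hy hxy) with heq | hlt
  · rw [heq]
  · rw [phi, phi]
    split_ifs with h1 h2 h2
    · -- both atoms: pivot is the sup of the lower level set
      set m := sSup (g ⁻¹' {g x} ∩ Set.Icc (0:ℝ) 1) with hm
      have hne : (g ⁻¹' {g x} ∩ Set.Icc (0:ℝ) 1).Nonempty := ⟨x, ⟨rfl, hx⟩⟩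
      have hbdd : BddAbove (g ⁻¹' {g x} ∩ Set.Icc (0:ℝ) 1) :=
        ⟨1, fun z hz => hz.2.2⟩
      have hub : ∀ z ∈ g ⁻¹' {g x} ∩ Set.Icc (0:ℝ) 1, z ≤ m :=
        fun z hz => le_csSup hbdd hz
      have hmIcc : m ∈ Set.Icc (0:ℝ) 1 := by
        constructor
        · exact hx.1.trans (hub x ⟨rfl, hx⟩)
        · exact csSup_le hne fun z hz => hz.2.2
      have hlb : ∀ w ∈ g ⁻¹' {g y} ∩ Set.Icc (0:ℝ) 1, m ≤ w := by
        intro w hw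
        apply csSup_le hne
        intro z hz
        have hz1 : g z = g x := hz.1
        have hw1 : g w = g y := hw.1
        have : g z < g w := by rw [hz1, hw1]; exact hlt
        exact le_of_level_lt hg hz.2 hw.2 this
      exact (avg_le_pivot hgm hh hint h1 hmIcc hub).trans
        (pivot_le_avg hgm hh hint h2 hmIcc hlb)
    · -- lower atom, upper null
      have h0 : leb (g ⁻¹' {g y}) = 0 := le_zero_iff.mp (not_lt.mp h2)
      rw [rho_fix hg hy h0]
      apply avg_le_pivot hgm hh hint h1 hy
      intro z hz
      have hz1 : g z = g x := hz.1
      have : g z < g y := by rw [hz1]; exact hlt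
      exact le_of_level_lt hg hz.2 hy this
    · -- lower null, upper atom
      have h0 : leb (g ⁻¹' {g x}) = 0 := le_zero_iff.mp (not_lt.mp h1)
      rw [rho_fix hg hx h0]
      apply pivot_le_avg hgm hh hint h2 hx
      intro w hw
      have hw1 : g w = g y := hw.1
      have : g x < g w := by rw [hw1]; exact hlt
      exact le_of_level_lt hg hx hw.2 this
    · -- both null
      have h0x : leb (g ⁻¹' {g x}) = 0 := le_zero_iff.mp (not_lt.mp h1)
      have h0y : leb (g ⁻¹' {g y}) = 0 := le_zero_iff.mp (not_lt.mp h2)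
      rw [rho_fix hg hx h0x, rho_fix hg hy h0y]
      exact hh hx hy hxy

lemma measurable_of_countable_ne {f ψ : ℝ → ℝ} (hψ : Measurable ψ)
    (hc : {x | f x ≠ ψ x}.Countable) : Measurable f := by
  intro B hB
  have hset : f ⁻¹' B =
      (ψ ⁻¹' B \ {x | f x ≠ ψ x}) ∪ (f ⁻¹' B ∩ {x | f x ≠ ψ x}) := by
    ext x
    by_cases hx : f x = ψ x <;>
      simp [Set.mem_preimage, Set.mem_setOf_eq, hx]
  rw [hset]
  exact ((hψ hB).diff hc.measurableSet).union
    ((hc.mono Set.inter_subset_right).measurableSet)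

lemma countable_T {g : ℝ → ℝ} (hgm : Measurable g) :
    {t : ℝ | 0 < leb (g ⁻¹' {t})}.Countable :=
  Measure.countable_meas_level_set_pos (μ := leb) hgm

lemma measurable_phi {g h : ℝ → ℝ} (hh : MonotoneOn h (Set.Icc 0 1))
    (hgm : Measurable g) : Measurable (phi g h) := by
  have hψm : Monotone (fun t => h (rho g t)) := fun s t hst =>
    hh (rho_mem g s) (rho_mem g t) (rho_mono g hst)
  apply measurable_of_countable_ne hψm.measurable
  apply (countable_T hgm).mono
  intro t ht
  by_contra h0
  exact ht (by rw [phi]; exact if_neg h0)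

lemma setIntegral_phi_eq {g h : ℝ → ℝ} (hg : MonotoneOn g (Set.Icc 0 1))
    (hgm : Measurable g) (hh : MonotoneOn h (Set.Icc 0 1))
    (hint : Integrable h leb) (hphi_int : Integrable (fun x => phi g h (g x)) leb)
    {B : Set ℝ} (hB : MeasurableSet B) :
    ∫ x in g ⁻¹' B, phi g h (g x) ∂leb = ∫ x in g ⁻¹' B, h x ∂leb := by
  set T := {t : ℝ | 0 < leb (g ⁻¹' {t})} with hTdef
  have hT : T.Countable := countable_T hgm
  have hTm : MeasurableSet T := hT.measurableSet
  have hsm : MeasurableSet (g ⁻¹' B) := hgm hB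
  have hDm : MeasurableSet (g ⁻¹' T) := hgm hTm
  have split1 :
      (∫ x in g ⁻¹' B ∩ g ⁻¹' T, phi g h (g x) ∂leb) +
        ∫ x in g ⁻¹' B \ g ⁻¹' T, phi g h (g x) ∂leb
      = ∫ x in g ⁻¹' B, phi g h (g x) ∂leb :=
    integral_inter_add_diff hDm hphi_int.integrableOn
  have split2 :
      (∫ x in g ⁻¹' B ∩ g ⁻¹' T, h x ∂leb) + ∫ x in g ⁻¹' B \ g ⁻¹' T, h x ∂leb
      = ∫ x in g ⁻¹' B, h x ∂leb :=
    integral_inter_add_diff hDm hint.integrableOn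
  have hdiff : ∫ x in g ⁻¹' B \ g ⁻¹' T, phi g h (g x) ∂leb
      = ∫ x in g ⁻¹' B \ g ⁻¹' T, h x ∂leb := by
    apply setIntegral_congr_ae (hsm.diff hDm)
    have h2 : ∀ᵐ z ∂leb, z ∈ Set.Icc (0:ℝ) 1 := by
      rw [leb]; exact ae_restrict_mem measurableSet_Icc
    filter_upwards [h2] with z hz hmem
    have h0 : ¬ 0 < leb (g ⁻¹' {g z}) := hmem.2
    have h0' : leb (g ⁻¹' {g z}) = 0 := le_zero_iff.mp (not_lt.mp h0)
    rw [phi, if_neg h0, rho_fix hg hz h0']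
  have hinter : ∫ x in g ⁻¹' B ∩ g ⁻¹' T, phi g h (g x) ∂leb
      = ∫ x in g ⁻¹' B ∩ g ⁻¹' T, h x ∂leb := by
    have hBT : (B ∩ T).Countable := hT.mono Set.inter_subset_right
    haveI := hBT.to_subtype
    have hsets : g ⁻¹' B ∩ g ⁻¹' T = ⋃ t : (B ∩ T : Set ℝ), g ⁻¹' {(t : ℝ)} := by
      ext z
      simp only [Set.mem_inter_iff, Set.mem_preimage, Set.mem_iUnion,
        Set.mem_singleton_iff, Subtype.exists, exists_prop]
      constructor
      · rintro ⟨hz1, hz2⟩; exact ⟨g z, ⟨hz1, hz2⟩, rfl⟩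
      · rintro ⟨t, ⟨ht1, ht2⟩, hzt⟩
        rw [hzt]; exact ⟨ht1, ht2⟩
    have hmeas : ∀ t : (B ∩ T : Set ℝ), MeasurableSet (g ⁻¹' {(t : ℝ)}) :=
      fun t => hgm (measurableSet_singleton _)
    have hdisj : Pairwise (Function.onFun Disjoint fun t : (B ∩ T : Set ℝ) => g ⁻¹' {(t : ℝ)}) := by
      intro i j hij
      exact Disjoint.preimage g (disjoint_singleton.mpr (Subtype.coe_injective.ne hij))
    rw [hsets, integral_iUnion hmeas hdisj (hsets ▸ hphi_int.integrableOn),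
      integral_iUnion hmeas hdisj (hsets ▸ hint.integrableOn)]
    apply tsum_congr
    intro t
    have ht : 0 < leb (g ⁻¹' {(t : ℝ)}) := t.2.2
    have hconst : Set.EqOn (fun x => phi g h (g x)) (fun _ => avg g h t)
        (g ⁻¹' {(t : ℝ)}) := by
      intro x hx
      have hgx : g x = t := hx
      simp only [hgx, phi, if_pos ht]
    rw [setIntegral_congr_fun (hmeas t) hconst, setIntegral_const, smul_eq_mul, avg,
      mul_comm, measureReal_def, div_mul_cancel₀]
    exact (ENNReal.toReal_pos ht.ne' (measure_ne_top leb _)).ne'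
  rw [← split1, ← split2, hdiff, hinter]

end Stmt15Aux

/-- **Remark 2.3 (iii).** For `g, h ∈ L₂^↑`, the conditional
expectation `pr_g h = E(h | σ(g))` on `([0,1], leb)` has a non-decreasing version. -/
theorem stmt_15 (g h : ℝ → ℝ) (hg : MonotoneOn g (Set.Icc 0 1)) (hgm : Measurable g)
    (hh : MonotoneOn h (Set.Icc 0 1)) (hh2 : MemLp h 2 leb) :
    ∃ f : ℝ → ℝ, MonotoneOn f (Set.Icc 0 1) ∧
      leb[h | MeasurableSpace.comap g (borel ℝ)] =ᵐ[leb] f := by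
  classical
  have hm : MeasurableSpace.comap g (borel ℝ) ≤ Real.measurableSpace :=
    measurable_iff_comap_le.mp hgm
  haveI : SigmaFinite (leb.trim hm) := by infer_instance
  have hint : Integrable h leb := hh2.integrable (by norm_num)
  have hphi : Measurable (Stmt15Aux.phi g h) := Stmt15Aux.measurable_phi hh hgm
  have hphim : Measurable (fun x => Stmt15Aux.phi g h (g x)) := hphi.comp hgm
  have haeIcc : ∀ᵐ z ∂leb, z ∈ Set.Icc (0:ℝ) 1 := by
    rw [leb]; exact ae_restrict_mem measurableSet_Icc
  have hbound : ∀ᵐ x ∂leb, ‖Stmt15Aux.phi g h (g x)‖ ≤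
      max ‖Stmt15Aux.phi g h (g 0)‖ ‖Stmt15Aux.phi g h (g 1)‖ := by
    filter_upwards [haeIcc] with z hz
    simp only [Real.norm_eq_abs]
    exact abs_le_max_abs_abs
      (Stmt15Aux.phi_mono_pair hg hgm hh hint (Set.left_mem_Icc.mpr zero_le_one) hz hz.1)
      (Stmt15Aux.phi_mono_pair hg hgm hh hint hz (Set.right_mem_Icc.mpr zero_le_one) hz.2)
  have hphi_int : Integrable (fun x => Stmt15Aux.phi g h (g x)) leb :=
    Integrable.mono' (integrable_const _) hphim.aestronglyMeasurable hbound
  have hgm' : Measurable[MeasurableSpace.comap g (borel ℝ)] g :=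
    Measurable.of_comap_le le_rfl
  have hker : (fun x => Stmt15Aux.phi g h (g x)) =ᵐ[leb]
      leb[h | MeasurableSpace.comap g (borel ℝ)] := by
    apply ae_eq_condExp_of_forall_setIntegral_eq hm hint
    · intro s _ _
      exact hphi_int.integrableOn
    · intro s hs _
      obtain ⟨B, hB, rfl⟩ := hs
      have hB' : MeasurableSet B := hB
      exact Stmt15Aux.setIntegral_phi_eq hg hgm hh hint hphi_int hB'
    · exact ⟨fun x => Stmt15Aux.phi g h (g x),
        (hphi.comp hgm').stronglyMeasurable, EventuallyEq.rfl⟩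
  refine ⟨fun x => Stmt15Aux.phi g h (g (max 0 (min x 1))), ?_, ?_⟩
  · intro x hx y hy hxy
    have hcx : max 0 (min x 1) = x := by
      rw [min_eq_left hx.2, max_eq_right hx.1]
    have hcy : max 0 (min y 1) = y := by
      rw [min_eq_left hy.2, max_eq_right hy.1]
    simp only [hcx, hcy]
    exact Stmt15Aux.phi_mono_pair hg hgm hh hint hx hy hxy
  · refine hker.symm.trans ?_
    filter_upwards [haeIcc] with z hz
    rw [min_eq_left hz.2, max_eq_right hz.1]

end
end

section
/- Let n ≥ 1, s ∈ [1,2], let 0 = q₀ < q₁ < … < q_{n−1} < qₙ = 1, and let h : [0,1] → ℝ be measurable with ∫₀¹ |h|^s dleb ≤ 1. Then Σ_{i=1}^n (1/(qᵢ − q_{i−1}))·(∫_{[q_{i−1}, qᵢ)} h dleb)² ≤ Σ_{i=1}^n (qᵢ − q_{i−1})^{1 − 2/s}. (The left-hand side equals ‖pr_g h‖₂², the squared L₂-norm of the conditional expectation of h given the σ-algebra generated by the intervals [q_{i−1}, qᵢ), i.e. given any step function g with jump points exactly q₁,…,q_{n−1}.) -/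
open MeasureTheory Set

noncomputable section

/-- If `‖h‖_s ≤ 1` (`s ∈ [1,2]`), then for any partition
`0 = q₀ < … < qₙ = 1`, the squared `L₂`-norm of the conditional expectation of `h`
given the partition, `Σᵢ (1/(qᵢ−q_{i−1})) (∫_{[q_{i−1},qᵢ)} h)²`, is at most
`Σᵢ (qᵢ−q_{i−1})^{1−2/s}`. -/
theorem stmt_18 (n : ℕ) (hn : 1 ≤ n) (s : ℝ) (hs : s ∈ Set.Icc (1:ℝ) 2)
    (q : Fin (n + 1) → ℝ) (hq0 : q 0 = 0) (hq1 : q (Fin.last n) = 1)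
    (hmono : StrictMono q)
    (h : ℝ → ℝ) (hmeas : Measurable h)
    (hnorm : ∫⁻ t, ENNReal.ofReal |h t| ^ s ∂leb ≤ 1) :
    ∑ i : Fin n, (1 / (q i.succ - q i.castSucc)) *
        (∫ t in Set.Ico (q i.castSucc) (q i.succ), h t ∂leb) ^ 2 ≤
      ∑ i : Fin n, (q i.succ - q i.castSucc) ^ (1 - 2 / s) := by
  have hs1 : (1:ℝ) ≤ s := hs.1
  have hs0 : (0:ℝ) < s := lt_of_lt_of_le one_pos hs1
  apply Finset.sum_le_sum
  intro i _
  set a := q i.castSucc with ha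
  set b := q i.succ with hb
  have hab : a < b := hmono (Fin.castSucc_lt_succ (i := i))
  have hΔ : (0:ℝ) < b - a := sub_pos.mpr hab
  set μ : Measure ℝ := leb.restrict (Set.Ico a b) with hμ
  -- the restricted s-integral is ≤ 1
  have hA : ∫⁻ t, ENNReal.ofReal |h t| ^ s ∂μ ≤ 1 := by
    refine le_trans ?_ hnorm
    exact setLIntegral_le_lintegral _ _
  -- measure of the whole space
  have hμuniv : μ Set.univ ≤ ENNReal.ofReal (b - a) := by
    rw [hμ, Measure.restrict_apply_univ, leb]
    refine le_trans (Measure.restrict_apply_le _ _) ?_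
    rw [Real.volume_Ico]
  -- eLpNorm bound in L^s
  have hsne : ENNReal.ofReal s ≠ 0 := by
    simp [ENNReal.ofReal_eq_zero, not_le, hs0]
  have hstop : ENNReal.ofReal s ≠ ⊤ := ENNReal.ofReal_ne_top
  have hLs : eLpNorm h (ENNReal.ofReal s) μ ≤ 1 := by
    rw [eLpNorm_eq_lintegral_rpow_enorm_toReal hsne hstop]
    rw [ENNReal.toReal_ofReal hs0.le]
    have hAe : ∫⁻ t, ‖h t‖ₑ ^ s ∂μ ≤ 1 := by
      simp_rw [Real.enorm_eq_ofReal_abs]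
      exact hA
    exact ENNReal.rpow_le_one hAe (by positivity)
  -- Hölder: L¹ norm bound
  have hone : (1 : ENNReal) ≤ ENNReal.ofReal s := by
    rw [← ENNReal.ofReal_one]
    exact ENNReal.ofReal_le_ofReal hs1
  have hL1 : eLpNorm h 1 μ ≤ ENNReal.ofReal ((b - a) ^ (1 - 1/s)) := by
    refine le_trans (eLpNorm_le_eLpNorm_mul_rpow_measure_univ hone
      hmeas.aestronglyMeasurable) ?_
    have hexp : 1 / (1:ENNReal).toReal - 1 / (ENNReal.ofReal s).toReal = 1 - 1/s := by
      rw [ENNReal.toReal_ofReal hs0.le]; simp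
    rw [hexp]
    calc eLpNorm h (ENNReal.ofReal s) μ * μ Set.univ ^ (1 - 1/s)
        ≤ 1 * ENNReal.ofReal (b - a) ^ (1 - 1/s) := by
          have h1s' : (0:ℝ) ≤ 1 - 1/s :=
            sub_nonneg.mpr ((div_le_one hs0).mpr hs1)
          gcongr
      _ = ENNReal.ofReal ((b - a) ^ (1 - 1/s)) := by
          rw [one_mul, ENNReal.ofReal_rpow_of_pos hΔ]
  -- integral bound
  have hI : |∫ t, h t ∂μ| ≤ (b - a) ^ (1 - 1/s) := by
    have h1 := norm_integral_le_lintegral_norm (μ := μ) h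
    rw [Real.norm_eq_abs] at h1
    refine le_trans h1 ?_
    have : ∫⁻ t, ENNReal.ofReal ‖h t‖ ∂μ = eLpNorm h 1 μ := by
      rw [eLpNorm_one_eq_lintegral_enorm]
      simp_rw [Real.enorm_eq_ofReal_abs, Real.norm_eq_abs]
    rw [this]
    exact ENNReal.toReal_le_of_le_ofReal (by positivity) hL1
  -- final arithmetic
  have hsq : (∫ t, h t ∂μ) ^ 2 ≤ ((b - a) ^ (1 - 1/s)) ^ 2 := by
    rw [← sq_abs]
    exact pow_le_pow_left₀ (abs_nonneg _) hI 2
  calc (1 / (b - a)) * (∫ t, h t ∂μ) ^ 2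
      ≤ (1 / (b - a)) * ((b - a) ^ (1 - 1/s)) ^ 2 := by
        apply mul_le_mul_of_nonneg_left hsq
        positivity
    _ = (b - a) ^ (1 - 2/s) := by
        rw [← Real.rpow_natCast ((b - a) ^ (1 - 1/s)) 2, ← Real.rpow_mul hΔ.le,
          one_div, ← Real.rpow_neg_one (b - a), ← Real.rpow_add hΔ]
        ring_nf

end
end

section
/- Let ξ ∈ D^↑ be bounded with Lebesgue–Stieltjes measure μ_ξ, let 0 ≤ a < b ≤ 1 and r ∈ [a,b). Then ∫_{(a,b]} ((b−t)/(b−a))·1_{(r,b]}(t) μ_ξ(dt) − ∫_{(a,b]} ((t−a)/(b−a))·1_{(a,r]}(t) μ_ξ(dt) = (1/(b−a))·∫_a^b ξ(u) du − ξ(r). -/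
open MeasureTheory Set
open scoped ENNReal

noncomputable section

private lemma swap_le (μ : Measure ℝ) [SigmaFinite μ] (r b : ℝ) :
    ∫⁻ t in Ioc r b, ENNReal.ofReal (b - t) ∂μ
      = ∫⁻ u in Ioc r b, μ (Ioc r u) := by
  have hS : MeasurableSet {p : ℝ × ℝ | p.1 ≤ p.2} :=
    measurableSet_le measurable_fst measurable_snd
  set f : ℝ → ℝ → ℝ≥0∞ := fun t u =>
    Set.indicator {p : ℝ × ℝ | p.1 ≤ p.2} (fun _ => (1:ℝ≥0∞)) (t, u) with hf
  have hmeas : AEMeasurable (Function.uncurry f)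
      ((μ.restrict (Ioc r b)).prod (volume.restrict (Ioc r b))) := by
    have : Function.uncurry f
        = Set.indicator {p : ℝ × ℝ | p.1 ≤ p.2} (fun _ => (1:ℝ≥0∞)) := rfl
    rw [this]
    exact (measurable_const.indicator hS).aemeasurable
  have hswap := lintegral_lintegral_swap hmeas
  have hL : ∫⁻ t in Ioc r b, (∫⁻ u in Ioc r b, f t u) ∂μ
      = ∫⁻ t in Ioc r b, ENNReal.ofReal (b - t) ∂μ := by
    refine setLIntegral_congr_fun measurableSet_Ioc (fun t ht => ?_)
    have h1 : (fun u => f t u) = (Ici t).indicator (fun _ => (1:ℝ≥0∞)) := by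
      funext u
      simp [hf, Set.indicator_apply, Set.mem_Ici]
    rw [h1, lintegral_indicator measurableSet_Ici, Measure.restrict_restrict measurableSet_Ici]
    have h2 : Ici t ∩ Ioc r b = Icc t b := by
      ext x
      simp only [mem_inter_iff, mem_Ici, mem_Ioc, mem_Icc]
      exact ⟨fun h => ⟨h.1, h.2.2⟩, fun h => ⟨h.1, lt_of_lt_of_le ht.1 h.1, h.2⟩⟩
    rw [h2]
    simp [Real.volume_Icc]
  have hR : ∫⁻ u in Ioc r b, (∫⁻ t in Ioc r b, f t u ∂μ)
      = ∫⁻ u in Ioc r b, μ (Ioc r u) := by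
    refine setLIntegral_congr_fun measurableSet_Ioc (fun u hu => ?_)
    have h1 : (fun t => f t u) = (Iic u).indicator (fun _ => (1:ℝ≥0∞)) := by
      funext t
      simp [hf, Set.indicator_apply, Set.mem_Iic]
    rw [h1, lintegral_indicator measurableSet_Iic, Measure.restrict_restrict measurableSet_Iic]
    have h2 : Iic u ∩ Ioc r b = Ioc r u := by
      ext x
      simp only [mem_inter_iff, mem_Iic, mem_Ioc]
      exact ⟨fun h => ⟨h.2.1, h.1⟩, fun h => ⟨h.2, h.1, le_trans h.2 hu.2⟩⟩
    rw [h2, setLIntegral_one]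
  rw [← hL, ← hR, hswap]

private lemma swap_lt (μ : Measure ℝ) [SigmaFinite μ] (a r : ℝ) :
    ∫⁻ t in Ioc a r, ENNReal.ofReal (t - a) ∂μ
      = ∫⁻ u in Ioc a r, μ (Ioc u r) := by
  have hS : MeasurableSet {p : ℝ × ℝ | p.2 < p.1} :=
    measurableSet_lt measurable_snd measurable_fst
  set f : ℝ → ℝ → ℝ≥0∞ := fun t u =>
    Set.indicator {p : ℝ × ℝ | p.2 < p.1} (fun _ => (1:ℝ≥0∞)) (t, u) with hf
  have hmeas : AEMeasurable (Function.uncurry f)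
      ((μ.restrict (Ioc a r)).prod (volume.restrict (Ioc a r))) := by
    have : Function.uncurry f
        = Set.indicator {p : ℝ × ℝ | p.2 < p.1} (fun _ => (1:ℝ≥0∞)) := rfl
    rw [this]
    exact (measurable_const.indicator hS).aemeasurable
  have hswap := lintegral_lintegral_swap hmeas
  have hL : ∫⁻ t in Ioc a r, (∫⁻ u in Ioc a r, f t u) ∂μ
      = ∫⁻ t in Ioc a r, ENNReal.ofReal (t - a) ∂μ := by
    refine setLIntegral_congr_fun measurableSet_Ioc (fun t ht => ?_)
    have h1 : (fun u => f t u) = (Iio t).indicator (fun _ => (1:ℝ≥0∞)) := by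
      funext u
      simp [hf, Set.indicator_apply, Set.mem_Iio]
    rw [h1, lintegral_indicator measurableSet_Iio, Measure.restrict_restrict measurableSet_Iio]
    have h2 : Iio t ∩ Ioc a r = Ioo a t := by
      ext x
      simp only [mem_inter_iff, mem_Iio, mem_Ioc, mem_Ioo]
      exact ⟨fun h => ⟨h.2.1, h.1⟩, fun h => ⟨h.2, h.1, le_trans (le_of_lt h.2) ht.2⟩⟩
    rw [h2]
    simp [Real.volume_Ioo]
  have hR : ∫⁻ u in Ioc a r, (∫⁻ t in Ioc a r, f t u ∂μ)
      = ∫⁻ u in Ioc a r, μ (Ioc u r) := by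
    refine setLIntegral_congr_fun measurableSet_Ioc (fun u hu => ?_)
    have h1 : (fun t => f t u) = (Ioi u).indicator (fun _ => (1:ℝ≥0∞)) := by
      funext t
      simp [hf, Set.indicator_apply, Set.mem_Ioi]
    rw [h1, lintegral_indicator measurableSet_Ioi, Measure.restrict_restrict measurableSet_Ioi]
    have h2 : Ioi u ∩ Ioc a r = Ioc u r := by
      ext x
      simp only [mem_inter_iff, mem_Ioi, mem_Ioc]
      exact ⟨fun h => ⟨h.1, h.2.2⟩, fun h => ⟨h.1, lt_of_le_of_lt hu.1.le h.1 |>.trans_le le_rfl, h.2⟩⟩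
    rw [h2, setLIntegral_one]
  rw [← hL, ← hR, hswap]

/-- For a bounded `ξ ∈ D^↑` with Lebesgue–Stieltjes measure `μ_ξ`,
`0 ≤ a < b ≤ 1` and `r ∈ [a,b)`:
`∫_{(a,b]} ((b−t)/(b−a)) 1_{(r,b]}(t) μ_ξ(dt) − ∫_{(a,b]} ((t−a)/(b−a)) 1_{(a,r]}(t) μ_ξ(dt)
  = (1/(b−a)) ∫_a^b ξ(u) du − ξ(r)`. -/
theorem stmt_19 (ξ : StieltjesFunction ℝ)
    (hξ0 : ∀ x ≤ (0:ℝ), ξ x = ξ 0) (hξ1 : ∀ x, (1:ℝ) ≤ x → ξ x = ξ 1)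
    (hξc : ContinuousAt ξ 1)
    (a b r : ℝ) (ha : 0 ≤ a) (hab : a < b) (hb : b ≤ 1) (hr : r ∈ Set.Ico a b) :
    (∫ t in Set.Ioc a b,
        ((b - t) / (b - a)) * Set.indicator (Set.Ioc r b) (fun _ => (1:ℝ)) t ∂ξ.measure)
    - (∫ t in Set.Ioc a b,
        ((t - a) / (b - a)) * Set.indicator (Set.Ioc a r) (fun _ => (1:ℝ)) t ∂ξ.measure)
    = (1 / (b - a)) * (∫ u in a..b, ξ u) - ξ r := by
  obtain ⟨har, hrb⟩ := hr
  have hba : (0:ℝ) < b - a := sub_pos.mpr hab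
  -- integrability of ξ
  have hint : ∀ c d : ℝ, IntegrableOn ξ (Ioc c d) volume := fun c d =>
    ((ξ.mono.monotoneOn _).integrableOn_isCompact isCompact_Icc).mono_set Ioc_subset_Icc_self
  -- rewrite first integral
  have e1 : (∫ t in Set.Ioc a b,
        ((b - t) / (b - a)) * Set.indicator (Set.Ioc r b) (fun _ => (1:ℝ)) t ∂ξ.measure)
      = ∫ t in Ioc r b, (b - t) / (b - a) ∂ξ.measure := by
    have : ∀ t, ((b - t) / (b - a)) * Set.indicator (Set.Ioc r b) (fun _ => (1:ℝ)) t
        = Set.indicator (Set.Ioc r b) (fun t => (b - t) / (b - a)) t := by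
      intro t
      by_cases h : t ∈ Set.Ioc r b <;> simp [h]
    simp_rw [this]
    rw [integral_indicator measurableSet_Ioc, Measure.restrict_restrict measurableSet_Ioc,
      Set.inter_eq_left.mpr (Ioc_subset_Ioc_left har)]
  have e2 : (∫ t in Set.Ioc a b,
        ((t - a) / (b - a)) * Set.indicator (Set.Ioc a r) (fun _ => (1:ℝ)) t ∂ξ.measure)
      = ∫ t in Ioc a r, (t - a) / (b - a) ∂ξ.measure := by
    have : ∀ t, ((t - a) / (b - a)) * Set.indicator (Set.Ioc a r) (fun _ => (1:ℝ)) t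
        = Set.indicator (Set.Ioc a r) (fun t => (t - a) / (b - a)) t := by
      intro t
      by_cases h : t ∈ Set.Ioc a r <;> simp [h]
    simp_rw [this]
    rw [integral_indicator measurableSet_Ioc, Measure.restrict_restrict measurableSet_Ioc,
      Set.inter_eq_left.mpr (Ioc_subset_Ioc_right hrb.le)]
  rw [e1, e2]
  -- key identities via Fubini
  have hA : ∫ t in Ioc r b, (b - t) ∂ξ.measure = ∫ u in Ioc r b, (ξ u - ξ r) := by
    rw [integral_eq_lintegral_of_nonneg_ae (f := fun t => b - t)
        ((ae_restrict_iff' measurableSet_Ioc).2 (ae_of_all _ fun t ht => by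
          simp only [Pi.zero_apply]; linarith [ht.2]))
        ((continuous_const.sub continuous_id').aestronglyMeasurable.restrict),
      integral_eq_lintegral_of_nonneg_ae (f := fun u => ξ u - ξ r)
        ((ae_restrict_iff' measurableSet_Ioc).2 (ae_of_all _ fun u hu => by
          simp only [Pi.zero_apply]; linarith [ξ.mono hu.1.le]))
        ((ξ.mono.measurable.sub measurable_const).aestronglyMeasurable.restrict)]
    rw [swap_le]
    congr 1
    refine setLIntegral_congr_fun measurableSet_Ioc (fun u hu => ?_)
    rw [ξ.measure_Ioc]
  have hB : ∫ t in Ioc a r, (t - a) ∂ξ.measure = ∫ u in Ioc a r, (ξ r - ξ u) := by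
    rw [integral_eq_lintegral_of_nonneg_ae (f := fun t => t - a)
        ((ae_restrict_iff' measurableSet_Ioc).2 (ae_of_all _ fun t ht => by
          simp only [Pi.zero_apply]; linarith [ht.1]))
        ((continuous_id'.sub continuous_const).aestronglyMeasurable.restrict),
      integral_eq_lintegral_of_nonneg_ae (f := fun u => ξ r - ξ u)
        ((ae_restrict_iff' measurableSet_Ioc).2 (ae_of_all _ fun u hu => by
          simp only [Pi.zero_apply]; linarith [ξ.mono hu.2]))
        ((measurable_const.sub ξ.mono.measurable).aestronglyMeasurable.restrict)]
    rw [swap_lt]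
    congr 1
    refine setLIntegral_congr_fun measurableSet_Ioc (fun u hu => ?_)
    rw [ξ.measure_Ioc]
  -- expand the right-hand sides of hA and hB
  have hA' : ∫ u in Ioc r b, (ξ u - ξ r) = (∫ u in r..b, ξ u) - (b - r) * ξ r := by
    rw [integral_sub (hint r b) (integrableOn_const measure_Ioc_lt_top.ne),
      setIntegral_const, intervalIntegral.integral_of_le hrb.le]
    rw [measureReal_def, Real.volume_Ioc, ENNReal.toReal_ofReal (by linarith)]
    simp [smul_eq_mul]
  have hB' : ∫ u in Ioc a r, (ξ r - ξ u) = (r - a) * ξ r - (∫ u in a..r, ξ u) := by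
    rw [integral_sub (integrableOn_const (C := ξ r) measure_Ioc_lt_top.ne) (hint a r),
      setIntegral_const, intervalIntegral.integral_of_le har]
    rw [measureReal_def, Real.volume_Ioc, ENNReal.toReal_ofReal (by linarith)]
    simp [smul_eq_mul]
  -- pull out constants
  have c1 : ∫ t in Ioc r b, (b - t) / (b - a) ∂ξ.measure
      = (∫ t in Ioc r b, (b - t) ∂ξ.measure) / (b - a) := by
    simp_rw [div_eq_mul_inv]
    exact integral_mul_const _ _
  have c2 : ∫ t in Ioc a r, (t - a) / (b - a) ∂ξ.measure
      = (∫ t in Ioc a r, (t - a) ∂ξ.measure) / (b - a) := by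
    simp_rw [div_eq_mul_inv]
    exact integral_mul_const _ _
  rw [c1, c2, hA, hB, hA', hB']
  have hsplit : (∫ u in a..r, ξ u) + (∫ u in r..b, ξ u) = ∫ u in a..b, ξ u :=
    intervalIntegral.integral_add_adjacent_intervals
      (ξ.mono.intervalIntegrable) (ξ.mono.intervalIntegrable)
  field_simp
  linarith [hsplit]

end
end
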